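/- arXiv:2111.00832 — 11 statements merged into one kernel-verified Lean document; each statement's English description precedes it below -/
import Mathlib

section
/- Let f: ℕ₊ → (0,∞) and let (T_k)_{k≥1} be independent random variables with T_k exponentially distributed with rate f(k). Then for every λ > 0, with S_l = T_1 + ⋯ + T_l, one has the identity (in [0,∞]) 𝔼[(Σ_{l=1}^{∞} e^{−λ S_l})²] = Σ_{l=1}^{∞} ∏_{i=1}^{l} f(i)/(2λ + f(i)) + 2 Σ_{k=1}^{∞} Σ_{l=k+1}^{∞} ∏_{i=1}^{k} f(i)/(2λ + f(i)) · ∏_{i=k+1}^{l} f(i)/(λ + f(i)). -/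
open MeasureTheory ProbabilityTheory

section Stmt2Aux

open Real Set
open scoped ENNReal NNReal

private lemma aux_exp_int (a : ℝ) (ha : 0 < a) :
    ∫ x in Ioi (0:ℝ), Real.exp (-(a * x)) = a⁻¹ := by
  have h := MeasureTheory.integral_comp_mul_left_Ioi (fun y => Real.exp (-y)) 0 ha
  simp only [mul_zero, integral_exp_neg_Ioi_zero, smul_eq_mul, mul_one] at h
  simpa using h

private lemma aux_moment {r c : ℝ} (hr : 0 < r) (hc : 0 ≤ c) :
    ∫⁻ x, ENNReal.ofReal (Real.exp (-(c * x))) ∂(expMeasure r)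
      = ENNReal.ofReal (r / (c + r)) := by
  have hmeas : Measurable fun x : ℝ => ENNReal.ofReal (Real.exp (-(c * x))) := by fun_prop
  have hpdf : Measurable (exponentialPDF r) := by
    unfold exponentialPDF
    exact (measurable_exponentialPDFReal r).ennreal_ofReal
  have hExp : expMeasure r = Measure.withDensity volume (exponentialPDF r) := rfl
  rw [hExp, lintegral_withDensity_eq_lintegral_mul _ hpdf hmeas]
  have hca : 0 < c + r := by linarith
  rw [← lintegral_add_compl (μ := volume) _ (measurableSet_Ici (a := (0:ℝ)))]
  have h2 : ∫⁻ x in (Ici (0:ℝ))ᶜ,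
      (exponentialPDF r * fun x => ENNReal.ofReal (Real.exp (-(c * x)))) x = 0 := by
    rw [compl_Ici, setLIntegral_congr_fun (g := fun _ => 0) measurableSet_Iio
      (fun x hx => by
        simp only [Pi.mul_apply, exponentialPDF_of_neg (mem_Iio.mp hx), zero_mul])]
    simp
  rw [h2, add_zero]
  have h1 : ∫⁻ x in Ici (0:ℝ), (exponentialPDF r * fun x => ENNReal.ofReal (Real.exp (-(c * x)))) x
      = ∫⁻ x in Ici (0:ℝ), ENNReal.ofReal (r * Real.exp (-((c + r) * x))) := by
    apply setLIntegral_congr_fun measurableSet_Ici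
    intro x hx
    rw [Pi.mul_apply, exponentialPDF_of_nonneg (mem_Ici.mp hx),
      ← ENNReal.ofReal_mul (by positivity)]
    congr 1
    rw [mul_assoc, ← Real.exp_add]
    ring_nf
  rw [h1, ← restrict_Ioi_eq_restrict_Ici]
  have hint : IntegrableOn (fun x => r * Real.exp (-((c + r) * x))) (Ioi (0:ℝ)) := by
    have h0 : (fun x : ℝ => r * rexp (-((c + r) * x))) = fun x => r * rexp (-(c + r) * x) := by
      funext x; rw [neg_mul]
    rw [h0]; exact (exp_neg_integrableOn_Ioi 0 hca).const_mul r
  rw [← ofReal_integral_eq_lintegral_ofReal hint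
    (ae_of_all _ (fun x => by positivity))]
  rw [MeasureTheory.integral_const_mul, aux_exp_int _ hca, div_eq_mul_inv]

private lemma aux_indep_prod {Ω : Type*} [MeasurableSpace Ω] {P : Measure Ω}
    [IsProbabilityMeasure P]
    (T : ℕ+ → Ω → ℝ) (hmeas : ∀ k, Measurable (T k))
    (hindep : iIndepFun T P)
    (φ : ℕ+ → ℝ → ℝ≥0∞) (hφ : ∀ i, Measurable (φ i)) (s : Finset ℕ+) :
    ∫⁻ ω, ∏ i ∈ s, φ i (T i ω) ∂P = ∏ i ∈ s, ∫⁻ ω, φ i (T i ω) ∂P := by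
  classical
  induction s using Finset.induction_on with
  | empty => simp
  | @insert a s ha ih =>
    simp only [Finset.prod_insert ha]
    rw [← ih]
    have h0 := hindep.indepFun_finset {a} s (Finset.disjoint_singleton_left.mpr ha) hmeas
    have h1 : Measurable fun v : (i : ({a} : Finset ℕ+)) → ℝ =>
        φ a (v ⟨a, Finset.mem_singleton_self a⟩) :=
      (hφ a).comp (measurable_pi_apply _)
    have h2 : Measurable fun v : (i : (s : Finset ℕ+)) → ℝ =>
        ∏ i ∈ s.attach, φ i (v i) :=
      Finset.measurable_prod _ fun i _ => (hφ i).comp (measurable_pi_apply _)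
    have hI := h0.comp h1 h2
    have hI' : IndepFun (fun ω => φ a (T a ω)) (fun ω => ∏ i ∈ s, φ i (T i ω)) P := by
      convert hI using 1
      · rfl
      funext ω
      simp only [Function.comp_apply]
      rw [← Finset.prod_attach s (fun i => φ i (T i ω))]
    have := lintegral_mul_eq_lintegral_mul_lintegral_of_indepFun
      ((hφ a).comp (hmeas a))
      (Finset.measurable_prod s fun i _ => (hφ i).comp (hmeas i)) hI'
    simpa [Pi.mul_apply] using this

private lemma aux_single {Ω : Type*} [MeasurableSpace Ω] {P : Measure Ω} [IsProbabilityMeasure P]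
    {f : ℕ+ → ℝ} (hf : ∀ k, 0 < f k) {T : ℕ+ → Ω → ℝ} (hmeas : ∀ k, Measurable (T k))
    (hlaw : ∀ k, Measure.map (T k) P = expMeasure (f k)) (k : ℕ+) {c : ℝ} (hc : 0 ≤ c) :
    ∫⁻ ω, ENNReal.ofReal (Real.exp (-(c * T k ω))) ∂P = ENNReal.ofReal (f k / (c + f k)) := by
  rw [← lintegral_map (f := fun x => ENNReal.ofReal (Real.exp (-(c * x)))) (by fun_prop) (hmeas k),
    hlaw k, aux_moment (hf k) hc]

private lemma aux_key {Ω : Type*} [MeasurableSpace Ω] {P : Measure Ω} [IsProbabilityMeasure P]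
    {f : ℕ+ → ℝ} (hf : ∀ k, 0 < f k)
    {T : ℕ+ → Ω → ℝ} (hmeas : ∀ k, Measurable (T k))
    (hindep : iIndepFun T P)
    (hlaw : ∀ k, Measure.map (T k) P = expMeasure (f k))
    {lam : ℝ} (hlam : 0 < lam) (k l : ℕ+) (hkl : k ≤ l) :
    ∫⁻ ω, ENNReal.ofReal (Real.exp (-lam * ∑ i ∈ Finset.Icc 1 k, T i ω))
        * ENNReal.ofReal (Real.exp (-lam * ∑ i ∈ Finset.Icc 1 l, T i ω)) ∂P
      = (∏ i ∈ Finset.Icc 1 k, ENNReal.ofReal (f i / (2 * lam + f i)))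
        * ∏ i ∈ Finset.Icc (k + 1) l, ENNReal.ofReal (f i / (lam + f i)) := by
  classical
  set c : ℕ+ → ℝ := fun i => if i ≤ k then 2 * lam else lam with hc
  have hcpos : ∀ i, 0 ≤ c i := by
    intro i; simp only [hc]; split <;> linarith
  have hsplit : Finset.Icc 1 l = Finset.Icc 1 k ∪ Finset.Icc (k + 1) l := by
    ext i
    simp only [Finset.mem_Icc, Finset.mem_union, ← PNat.coe_le_coe, PNat.add_coe, PNat.one_coe]
    have := hkl
    rw [← PNat.coe_le_coe] at this
    omega
  have hdisj : Disjoint (Finset.Icc 1 k) (Finset.Icc (k + 1) l) := by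
    rw [Finset.disjoint_left]
    intro i hi hi'
    simp only [Finset.mem_Icc, ← PNat.coe_le_coe, PNat.add_coe, PNat.one_coe] at hi hi'
    omega
  have hpt : ∀ ω, ENNReal.ofReal (Real.exp (-lam * ∑ i ∈ Finset.Icc 1 k, T i ω))
        * ENNReal.ofReal (Real.exp (-lam * ∑ i ∈ Finset.Icc 1 l, T i ω))
      = ∏ i ∈ Finset.Icc 1 l, ENNReal.ofReal (Real.exp (-(c i * T i ω))) := by
    intro ω
    rw [← ENNReal.ofReal_mul (Real.exp_nonneg _), ← Real.exp_add,
      ← ENNReal.ofReal_prod_of_nonneg (fun i _ => Real.exp_nonneg _), ← Real.exp_sum]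
    congr 1
    have hS : ∑ i ∈ Finset.Icc 1 l, T i ω
        = (∑ i ∈ Finset.Icc 1 k, T i ω) + ∑ i ∈ Finset.Icc (k + 1) l, T i ω := by
      rw [hsplit, Finset.sum_union hdisj]
    rw [hS, hsplit, Finset.sum_union hdisj]
    have h1 : ∑ i ∈ Finset.Icc 1 k, -(c i * T i ω)
        = ∑ i ∈ Finset.Icc 1 k, -(2 * lam * T i ω) :=
      Finset.sum_congr rfl (fun i hi => by
        simp only [hc, if_pos (Finset.mem_Icc.mp hi).2])
    have h2 : ∑ i ∈ Finset.Icc (k + 1) l, -(c i * T i ω)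
        = ∑ i ∈ Finset.Icc (k + 1) l, -(lam * T i ω) :=
      Finset.sum_congr rfl (fun i hi => by
        have hi' := (Finset.mem_Icc.mp hi).1
        have : ¬ i ≤ k := by
          rw [← PNat.coe_le_coe] at hi' ⊢; rw [PNat.add_coe, PNat.one_coe] at hi'; omega
        simp only [hc, if_neg this])
    rw [h1, h2, Finset.sum_neg_distrib, Finset.sum_neg_distrib, ← Finset.mul_sum, ← Finset.mul_sum]
    ring_nf
  rw [lintegral_congr hpt,
    aux_indep_prod T hmeas hindep (fun i x => ENNReal.ofReal (Real.exp (-(c i * x))))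
      (fun i => by fun_prop) _]
  have hval : ∏ i ∈ Finset.Icc 1 l, ∫⁻ ω, ENNReal.ofReal (Real.exp (-(c i * T i ω))) ∂P
      = ∏ i ∈ Finset.Icc 1 l, ENNReal.ofReal (f i / (c i + f i)) :=
    Finset.prod_congr rfl fun i _ => aux_single hf hmeas hlaw i (hcpos i)
  rw [hval, hsplit, Finset.prod_union hdisj]
  congr 1
  · refine Finset.prod_congr rfl fun i hi => by
      simp only [hc, if_pos (Finset.mem_Icc.mp hi).2]
  · refine Finset.prod_congr rfl fun i hi => ?_
    have hi' := (Finset.mem_Icc.mp hi).1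
    have hni : ¬ i ≤ k := by
      rw [← PNat.coe_le_coe] at hi' ⊢; rw [PNat.add_coe, PNat.one_coe] at hi'; omega
    simp only [hc, if_neg hni]

private def auxEquiv : (Σ k : ℕ+, {l : ℕ+ // l < k}) ≃ (Σ k : ℕ+, {l : ℕ+ // k < l}) where
  toFun p := ⟨p.2.1, p.1, p.2.2⟩
  invFun p := ⟨p.2.1, p.1, p.2.2⟩
  left_inv := fun ⟨_, _, _⟩ => rfl
  right_inv := fun ⟨_, _, _⟩ => rfl

private lemma aux_tsum (E : ℕ+ → ℕ+ → ℝ≥0∞) (hsym : ∀ k l, E k l = E l k) :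
    ∑' (k : ℕ+), ∑' (l : ℕ+), E k l
      = (∑' (l : ℕ+), E l l)
        + 2 * ∑' (k : ℕ+), ∑' (l : {l : ℕ+ // k < l}), E k (l : ℕ+) := by
  classical
  have hsub : ∀ (k : ℕ+) (p : ℕ+ → Prop) [DecidablePred p],
      (∑' l : {l : ℕ+ // p l}, E k (l : ℕ+)) = ∑' l, (if p l then E k l else 0) := by
    intro k p _
    exact (tsum_subtype {l : ℕ+ | p l} (E k)).trans
      (tsum_congr fun l => by simp [Set.indicator_apply])
  have hsplit : ∀ k : ℕ+, ∑' l, E k l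
      = (∑' l : {l : ℕ+ // l < k}, E k (l : ℕ+))
        + E k k + ∑' l : {l : ℕ+ // k < l}, E k (l : ℕ+) := by
    intro k
    have hdec : ∀ l : ℕ+, E k l
        = (if l < k then E k l else 0) + (if l = k then E k l else 0)
          + (if k < l then E k l else 0) := by
      intro l
      rcases lt_trichotomy l k with h | h | h
      · simp [h, ne_of_lt h, lt_asymm h]
      · simp [h, lt_irrefl]
      · simp [ne_of_gt h, lt_asymm h, h]
    rw [tsum_congr hdec, ENNReal.tsum_add, ENNReal.tsum_add, hsub k (· < k), hsub k (k < ·)]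
    congr 1
    congr 1
    have h1 : (∑' a : ℕ+, if a = k then E k a else 0)
        = ∑' a : ℕ+, if a = k then E k k else 0 :=
      tsum_congr fun a => by by_cases h : a = k <;> simp [h]
    rw [h1, tsum_ite_eq]
  rw [tsum_congr hsplit, ENNReal.tsum_add, ENNReal.tsum_add]
  have hAB : (∑' (k : ℕ+), ∑' (l : {l : ℕ+ // l < k}), E k (l : ℕ+))
      = ∑' (k : ℕ+), ∑' (l : {l : ℕ+ // k < l}), E k (l : ℕ+) := by
    rw [← ENNReal.tsum_sigma (fun k (l : {l : ℕ+ // l < k}) => E k (l : ℕ+)),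
      ← ENNReal.tsum_sigma (fun k (l : {l : ℕ+ // k < l}) => E k (l : ℕ+))]
    rw [← Equiv.tsum_eq auxEquiv (fun q => E q.1 (q.2 : ℕ+))]
    exact tsum_congr fun ⟨k, l, h⟩ => hsym k l
  rw [hAB, two_mul]
  ring

end Stmt2Aux

/-- If `(T k)_{k ≥ 1}` are independent with `T k` exponentially distributed
with rate `f k > 0`, then for every `λ > 0`, with `S l = T 1 + ⋯ + T l`, one has the
identity in `[0,∞]`:
`𝔼[(Σ_{l=1}^∞ e^{−λ S_l})²] = Σ_{l=1}^∞ ∏_{i=1}^l f(i)/(2λ + f(i))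
  + 2 Σ_{k=1}^∞ Σ_{l=k+1}^∞ ∏_{i=1}^k f(i)/(2λ + f(i)) · ∏_{i=k+1}^l f(i)/(λ + f(i))`. -/
theorem stmt_2 {Ω : Type*} [MeasurableSpace Ω] (P : Measure Ω) [IsProbabilityMeasure P]
    (f : ℕ+ → ℝ) (hf : ∀ k, 0 < f k)
    (T : ℕ+ → Ω → ℝ) (hmeas : ∀ k, Measurable (T k))
    (hindep : iIndepFun T P)
    (hlaw : ∀ k, Measure.map (T k) P = expMeasure (f k))
    (lam : ℝ) (hlam : 0 < lam) :
    ∫⁻ ω, (∑' l : ℕ+, ENNReal.ofReal (Real.exp (-lam * ∑ i ∈ Finset.Icc 1 l, T i ω))) ^ 2 ∂P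
      = (∑' l : ℕ+, ∏ i ∈ Finset.Icc 1 l, ENNReal.ofReal (f i / (2 * lam + f i)))
        + 2 * ∑' k : ℕ+, ∑' l : {l : ℕ+ // k < l},
            (∏ i ∈ Finset.Icc 1 k, ENNReal.ofReal (f i / (2 * lam + f i)))
              * ∏ i ∈ Finset.Icc (k + 1) (l : ℕ+), ENNReal.ofReal (f i / (lam + f i)) := by
  classical
  have hgmeas : ∀ l : ℕ+,
      Measurable (fun ω => ENNReal.ofReal (Real.exp (-lam * ∑ i ∈ Finset.Icc 1 l, T i ω))) := by
    intro l
    exact (((Finset.measurable_sum _ (fun i _ => hmeas i)).const_mul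
      (-lam)).exp).ennreal_ofReal
  have hpt : ∀ ω, (∑' l : ℕ+, ENNReal.ofReal (Real.exp (-lam * ∑ i ∈ Finset.Icc 1 l, T i ω))) ^ 2
      = ∑' (k : ℕ+), ∑' (l : ℕ+),
          ENNReal.ofReal (Real.exp (-lam * ∑ i ∈ Finset.Icc 1 k, T i ω))
            * ENNReal.ofReal (Real.exp (-lam * ∑ i ∈ Finset.Icc 1 l, T i ω)) := by
    intro ω
    rw [sq, ← ENNReal.tsum_mul_right]
    exact tsum_congr fun k => (ENNReal.tsum_mul_left).symm
  rw [lintegral_congr hpt, lintegral_tsum (f := fun (k : ℕ+) (ω : Ω) => ∑' (l : ℕ+),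
      ENNReal.ofReal (Real.exp (-lam * ∑ i ∈ Finset.Icc 1 k, T i ω))
        * ENNReal.ofReal (Real.exp (-lam * ∑ i ∈ Finset.Icc 1 l, T i ω))) (fun k =>
    (Measurable.ennreal_tsum (fun l => (hgmeas k).mul (hgmeas l))).aemeasurable)]
  have hswap : ∀ k : ℕ+, ∫⁻ ω, ∑' (l : ℕ+),
        ENNReal.ofReal (Real.exp (-lam * ∑ i ∈ Finset.Icc 1 k, T i ω))
          * ENNReal.ofReal (Real.exp (-lam * ∑ i ∈ Finset.Icc 1 l, T i ω)) ∂P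
      = ∑' (l : ℕ+), ∫⁻ ω,
          ENNReal.ofReal (Real.exp (-lam * ∑ i ∈ Finset.Icc 1 k, T i ω))
            * ENNReal.ofReal (Real.exp (-lam * ∑ i ∈ Finset.Icc 1 l, T i ω)) ∂P :=
    fun k => lintegral_tsum (fun l => ((hgmeas k).mul (hgmeas l)).aemeasurable)
  rw [tsum_congr hswap]
  rw [aux_tsum (fun k l => ∫⁻ ω,
      ENNReal.ofReal (Real.exp (-lam * ∑ i ∈ Finset.Icc 1 k, T i ω))
        * ENNReal.ofReal (Real.exp (-lam * ∑ i ∈ Finset.Icc 1 l, T i ω)) ∂P)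
    (fun k l => lintegral_congr fun ω => mul_comm _ _)]
  congr 1
  · refine tsum_congr fun l => ?_
    rw [aux_key hf hmeas hindep hlaw hlam l l le_rfl]
    have hempty : Finset.Icc (l + 1) l = (∅ : Finset ℕ+) := by
      apply Finset.Icc_eq_empty
      rw [← PNat.coe_le_coe, PNat.add_coe, PNat.one_coe]
      omega
    rw [hempty, Finset.prod_empty, mul_one]
  · congr 1
    refine tsum_congr fun k => tsum_congr fun l => ?_
    exact aux_key hf hmeas hindep hlaw hlam k (l : ℕ+) (le_of_lt l.2)
end

section
/- Let f: ℕ₊ → (0,∞) satisfy f(k) ≤ C k^β for all k ∈ ℕ₊, for some constants C > 0 and β < 1. Then for every λ > 0 the series ρ_f(λ) = Σ_{l=1}^{∞} ∏_{i=1}^{l} f(i)/(λ + f(i)) converges (is finite). -/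
open Real Filter

/-- Summability of a stretched exponential over ℕ. -/
lemma summable_exp_neg_rpow_aux {c ε : ℝ} (hc : 0 < c) (hε : 0 < ε) :
    Summable (fun n : ℕ => Real.exp (-(c * (n : ℝ) ^ ε))) := by
  have hg : Summable (fun n : ℕ => (n : ℝ) ^ (-2 : ℝ)) :=
    Real.summable_nat_rpow.mpr (by norm_num)
  refine summable_of_isBigO_nat hg ?_
  have ht : Tendsto (fun x : ℝ => x ^ (2 / ε) * Real.exp (-c * x)) atTop (nhds 0) :=
    tendsto_rpow_mul_exp_neg_mul_atTop_nhds_zero (2 / ε) c hc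
  have htn : Tendsto (fun n : ℕ => ((n : ℝ) ^ ε) ^ (2 / ε) * Real.exp (-c * (n : ℝ) ^ ε))
      atTop (nhds 0) :=
    ht.comp ((tendsto_rpow_atTop hε).comp tendsto_natCast_atTop_atTop)
  have hev : ∀ᶠ n : ℕ in atTop,
      ((n : ℝ) ^ ε) ^ (2 / ε) * Real.exp (-c * (n : ℝ) ^ ε) ≤ 1 :=
    htn.eventually (eventually_le_nhds (by norm_num : (0:ℝ) < 1))
  refine Asymptotics.IsBigO.of_bound 1 ?_
  filter_upwards [hev, eventually_ge_atTop 1] with n hn hn1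
  have hn0 : (0 : ℝ) < (n : ℝ) := by exact_mod_cast hn1
  have hpow : ((n : ℝ) ^ ε) ^ (2 / ε) = (n : ℝ) ^ (2 : ℝ) := by
    rw [← Real.rpow_mul hn0.le, mul_div_cancel₀ _ hε.ne']
  rw [hpow] at hn
  have h2 : (0 : ℝ) < (n : ℝ) ^ (2 : ℝ) := Real.rpow_pos_of_pos hn0 _
  have hle : Real.exp (-(c * (n : ℝ) ^ ε)) ≤ (n : ℝ) ^ (-2 : ℝ) := by
    rw [Real.rpow_neg hn0.le, ← one_div, le_div_iff₀ h2, neg_mul_eq_neg_mul]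
    linarith [hn]
  rw [Real.norm_eq_abs, Real.norm_eq_abs, abs_of_pos (Real.exp_pos _),
    abs_of_pos (Real.rpow_pos_of_pos hn0 _), one_mul]
  exact hle

/-- If `f : ℕ₊ → (0,∞)` satisfies `f k ≤ C k^β` for all `k`, for some
`C > 0` and `β < 1`, then for every `λ > 0` the series
`ρ_f(λ) = Σ_{l=1}^∞ ∏_{i=1}^l f(i)/(λ + f(i))` converges. -/
theorem stmt_3 (f : ℕ+ → ℝ) (hf : ∀ k, 0 < f k)
    (C β : ℝ) (hC : 0 < C) (hβ : β < 1)
    (hbound : ∀ k : ℕ+, f k ≤ C * (k : ℝ) ^ β)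
    (lam : ℝ) (hlam : 0 < lam) :
    Summable (fun l : ℕ+ => ∏ i ∈ Finset.Icc 1 l, f i / (lam + f i)) := by
  set β' : ℝ := max β 0 with hβ'def
  have hβ'0 : (0:ℝ) ≤ β' := le_max_right _ _
  have hβ'1 : β' < 1 := max_lt hβ one_pos
  set ε : ℝ := 1 - β' with hεdef
  have hε : 0 < ε := by simp [hεdef]; linarith
  set c : ℝ := lam / (lam + C) with hcdef
  have hlC : 0 < lam + C := by linarith
  have hc : 0 < c := div_pos hlam hlC
  have key : ∀ l : ℕ+, ∏ i ∈ Finset.Icc 1 l, f i / (lam + f i)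
      ≤ Real.exp (-(c * (l : ℝ) ^ ε)) := by
    intro l
    have hl0 : (0:ℝ) < (l:ℝ) := by exact_mod_cast l.pos
    have hl1 : (1:ℝ) ≤ (l:ℝ) := by exact_mod_cast l.one_le
    set M : ℝ := C * (l : ℝ) ^ β' with hMdef
    have hM : 0 < M := mul_pos hC (Real.rpow_pos_of_pos hl0 _)
    have hlamM : 0 < lam + M := by linarith
    have step1 : ∀ i ∈ Finset.Icc 1 l, f i / (lam + f i)
        ≤ Real.exp (-(lam / (lam + M))) := by
      intro i hi
      have hi0 : (0:ℝ) < (i:ℝ) := by exact_mod_cast i.pos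
      have hi1 : (1:ℝ) ≤ (i:ℝ) := by exact_mod_cast i.one_le
      have hil : (i:ℝ) ≤ (l:ℝ) := by exact_mod_cast (Finset.mem_Icc.mp hi).2
      have hfi : f i ≤ M := by
        calc f i ≤ C * (i:ℝ) ^ β := hbound i
          _ ≤ C * (i:ℝ) ^ β' := mul_le_mul_of_nonneg_left
              (Real.rpow_le_rpow_of_exponent_le hi1 (le_max_left _ _)) hC.le
          _ ≤ M := by
              rw [hMdef]; gcongr
      have hfi0 : 0 < f i := hf i
      have h1 : f i / (lam + f i) ≤ M / (lam + M) := by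
        rw [div_le_div_iff₀ (by linarith) hlamM]
        nlinarith
      have h2 : M / (lam + M) = 1 - lam / (lam + M) := by
        field_simp
        ring
      have h3 : 1 - lam / (lam + M) ≤ Real.exp (-(lam / (lam + M))) := by
        have := Real.add_one_le_exp (-(lam / (lam + M)))
        linarith
      linarith [h1, h3, h2.ge, h2.le]
    have step2 : ∏ i ∈ Finset.Icc 1 l, f i / (lam + f i)
        ≤ Real.exp (-(lam / (lam + M))) ^ (l : ℕ) := by
      have := Finset.prod_le_prod (s := Finset.Icc 1 l)
        (f := fun i => f i / (lam + f i))
        (g := fun _ => Real.exp (-(lam / (lam + M))))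
        (fun i _ => div_nonneg (hf i).le (by linarith [hf i]))
        step1
      rwa [Finset.prod_const, PNat.card_Icc,
        show ((l:ℕ) + 1 - ((1:ℕ+):ℕ)) = (l:ℕ) by simp] at this
    have step3 : Real.exp (-(lam / (lam + M))) ^ (l : ℕ)
        = Real.exp (-((l : ℝ) * (lam / (lam + M)))) := by
      rw [← Real.exp_nat_mul, mul_neg]
    have step4 : c * (l : ℝ) ^ ε ≤ (l : ℝ) * (lam / (lam + M)) := by
      have hpow1 : (1:ℝ) ≤ (l:ℝ) ^ β' := Real.one_le_rpow hl1 hβ'0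
      have hMle : lam + M ≤ (lam + C) * (l:ℝ) ^ β' := by
        rw [hMdef]; nlinarith
      have hrw : (l : ℝ) ^ ε = (l : ℝ) / (l : ℝ) ^ β' := by
        rw [hεdef, Real.rpow_sub hl0, Real.rpow_one]
      have e1 : c * ((l:ℝ) / (l:ℝ) ^ β') = (lam * (l:ℝ)) / ((lam + C) * (l:ℝ) ^ β') := by
        rw [hcdef, div_mul_div_comm]
      have e2 : (l : ℝ) * (lam / (lam + M)) = (lam * (l:ℝ)) / (lam + M) := by ring
      rw [hrw, e1, e2]
      gcongr
    calc ∏ i ∈ Finset.Icc 1 l, f i / (lam + f i)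
        ≤ Real.exp (-((l : ℝ) * (lam / (lam + M)))) := by rw [← step3]; exact step2
      _ ≤ Real.exp (-(c * (l : ℝ) ^ ε)) := by
          apply Real.exp_le_exp.mpr; linarith
  have hsumN : Summable (fun n : ℕ => Real.exp (-(c * (n : ℝ) ^ ε))) :=
    summable_exp_neg_rpow_aux hc hε
  have hsumP : Summable (fun l : ℕ+ => Real.exp (-(c * (l : ℝ) ^ ε))) :=
    hsumN.comp_injective PNat.coe_injective
  exact Summable.of_nonneg_of_le
    (fun l => Finset.prod_nonneg fun i _ => div_nonneg (hf i).le (by linarith [hf i]))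
    key hsumP
end

section
/- Let f: ℕ₊ → (0,∞) satisfy f(k) ≤ C k^β for all k ∈ ℕ₊, for some constants C > 0 and β < 1. Then the function λ ↦ ρ_f(λ) = Σ_{l=1}^{∞} ∏_{i=1}^{l} f(i)/(λ + f(i)) is finite and strictly decreasing on (0,∞), tends to +∞ as λ ↓ 0 and to 0 as λ → ∞; consequently there exists a unique λ* ∈ (0,∞) with ρ_f(λ*) = 1 (the Malthusian parameter of f). -/
/-- The series `ρ_f(λ) = Σ_{l=1}^∞ ∏_{i=1}^l f(i)/(λ + f(i))`. -/
noncomputable def rhoF (f : ℕ+ → ℝ) (lam : ℝ) : ℝ :=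
  ∑' l : ℕ+, ∏ i ∈ Finset.Icc 1 l, f i / (lam + f i)

namespace Stmt4Aux

open Filter Finset

variable {f : ℕ+ → ℝ}

noncomputable def term (f : ℕ+ → ℝ) (lam : ℝ) (l : ℕ+) : ℝ :=
  ∏ i ∈ Finset.Icc 1 l, f i / (lam + f i)

lemma rhoF_eq (f : ℕ+ → ℝ) (lam : ℝ) : rhoF f lam = ∑' l : ℕ+, term f lam l := rfl

lemma term_pos (hf : ∀ k, 0 < f k) {lam : ℝ} (hlam : 0 ≤ lam) (l : ℕ+) :
    0 < term f lam l :=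
  Finset.prod_pos fun i _ => div_pos (hf i) (by have := hf i; linarith)

lemma term_anti (hf : ∀ k, 0 < f k) {lam mu : ℝ} (h0 : 0 ≤ lam) (h : lam ≤ mu) (l : ℕ+) :
    term f mu l ≤ term f lam l := by
  refine Finset.prod_le_prod (fun i _ => ?_) (fun i _ => ?_)
  · exact le_of_lt (div_pos (hf i) (by have := hf i; linarith))
  · have hfi := hf i
    rw [div_le_div_iff₀ (by linarith) (by linarith)]
    nlinarith

lemma term_strict_anti (hf : ∀ k, 0 < f k) {lam mu : ℝ} (h0 : 0 ≤ lam) (h : lam < mu)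
    (l : ℕ+) : term f mu l < term f lam l := by
  refine Finset.prod_lt_prod_of_nonempty (fun i _ => ?_) (fun i _ => ?_) ?_
  · exact div_pos (hf i) (by have := hf i; linarith)
  · have hfi := hf i
    rw [div_lt_div_iff₀ (by linarith) (by linarith)]
    nlinarith
  · exact Finset.nonempty_Icc.2 l.one_le

lemma one_le_coe (l : ℕ+) : (1 : ℝ) ≤ (l : ℝ) := by exact_mod_cast l.one_le

lemma summable_exp_aux {c ε : ℝ} (hc : 0 < c) (hε : 0 < ε) :
    Summable (fun l : ℕ+ => Real.exp (-(c * (l : ℝ) ^ ε))) := by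
  obtain ⟨m, hm⟩ : ∃ m : ℕ, 2 ≤ ε * m := by
    obtain ⟨m, hm⟩ := exists_nat_ge (2 / ε)
    exact ⟨m, by rw [div_le_iff₀ hε] at hm; linarith [mul_comm (m : ℝ) ε]⟩
  have hm0 : 0 < (m : ℝ) := by
    rcases Nat.eq_zero_or_pos m with h | h
    · exfalso; rw [h] at hm; norm_num at hm
    · exact_mod_cast h
  set D : ℝ := ((m : ℝ) / c) ^ m with hD
  have hD0 : 0 < D := by positivity
  have hsum : Summable (fun n : ℕ => D * (n : ℝ) ^ (-2 : ℝ)) :=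
    ((Real.summable_nat_rpow).2 (by norm_num)).mul_left D
  have hsum2 : Summable (fun l : ℕ+ => D * ((l : ℕ) : ℝ) ^ (-2 : ℝ)) :=
    hsum.comp_injective PNat.coe_injective
  refine Summable.of_nonneg_of_le (fun l => (Real.exp_pos _).le) (fun l => ?_) hsum2
  set x : ℝ := ((l : ℕ) : ℝ) with hxdef
  have hx1 : (1 : ℝ) ≤ x := one_le_coe l
  have hx0 : (0 : ℝ) < x := by linarith
  set t : ℝ := c * x ^ ε with ht
  have ht0 : 0 < t := by have := Real.rpow_pos_of_pos hx0 ε; positivity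
  -- exp t ≥ (t/m)^m
  have h1 : t / m ≤ Real.exp (t / m) := by
    have := Real.add_one_le_exp (t / m); linarith
  have h2 : (t / m) ^ m ≤ Real.exp t := by
    calc (t / m) ^ m ≤ (Real.exp (t / m)) ^ m :=
          pow_le_pow_left₀ (by positivity) h1 m
      _ = Real.exp ((m : ℝ) * (t / m)) := (Real.exp_nat_mul _ m).symm
      _ = Real.exp t := by congr 1; field_simp
  have h3 : x ^ (2 : ℝ) ≤ x ^ (ε * (m : ℝ)) :=
    Real.rpow_le_rpow_of_exponent_le hx1 (by exact_mod_cast hm)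
  have h4 : x ^ (ε * (m : ℝ)) = (x ^ ε) ^ m := by
    rw [Real.rpow_mul hx0.le, Real.rpow_natCast]
  have h5 : (x ^ ε) ^ m = D * (t / m) ^ m := by
    rw [hD, ← mul_pow]; congr 1; rw [ht]; field_simp
  have key : x ^ (2 : ℝ) ≤ D * Real.exp t := by
    calc x ^ (2 : ℝ) ≤ (x ^ ε) ^ m := by rw [← h4]; exact h3
      _ = D * (t / m) ^ m := h5
      _ ≤ D * Real.exp t := mul_le_mul_of_nonneg_left h2 hD0.le
  have hx2 : (0 : ℝ) < x ^ (2 : ℝ) := Real.rpow_pos_of_pos hx0 _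
  rw [Real.exp_neg, Real.rpow_neg hx0.le, inv_eq_one_div, ← div_eq_mul_inv,
    div_le_div_iff₀ (Real.exp_pos _) hx2]
  linarith

lemma summable_term (hf : ∀ k, 0 < f k) {C β : ℝ} (hC : 0 < C) (hβ : β < 1)
    (hbound : ∀ k : ℕ+, f k ≤ C * (k : ℝ) ^ β) {lam : ℝ} (hlam : 0 < lam) :
    Summable (term f lam) := by
  set γ := max β 0 with hγ
  have hγ0 : 0 ≤ γ := le_max_right _ _
  have hγ1 : γ < 1 := max_lt hβ one_pos
  have hb' : ∀ k : ℕ+, f k ≤ C * (k : ℝ) ^ γ := by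
    intro k
    refine (hbound k).trans (mul_le_mul_of_nonneg_left ?_ hC.le)
    exact Real.rpow_le_rpow_of_exponent_le (one_le_coe k) (le_max_left _ _)
  set ε := 1 - γ with hεdef
  have hε0 : 0 < ε := by simp only [hεdef]; linarith
  set c := lam / (lam + C) with hcdef
  have hc0 : 0 < c := div_pos hlam (by linarith)
  refine Summable.of_nonneg_of_le (fun l => (term_pos hf hlam.le l).le)
    (fun l => ?_) (summable_exp_aux hc0 hε0)
  set x : ℝ := ((l : ℕ) : ℝ) with hxdef
  have hx1 : (1 : ℝ) ≤ x := one_le_coe l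
  have hx0 : (0 : ℝ) < x := by linarith
  have hxγ0 : 0 < x ^ γ := Real.rpow_pos_of_pos hx0 _
  have hxγ1 : 1 ≤ x ^ γ := Real.one_le_rpow hx1 hγ0
  have hxε0 : 0 < x ^ ε := Real.rpow_pos_of_pos hx0 _
  have hden : 0 < lam + C * x ^ γ := by positivity
  set r : ℝ := C * x ^ γ / (lam + C * x ^ γ) with hrdef
  have step1 : term f lam l ≤ r ^ (l : ℕ) := by
    have h : term f lam l ≤ ∏ _i ∈ Finset.Icc 1 l, r := by
      refine Finset.prod_le_prod
        (fun i _ => le_of_lt (div_pos (hf i) (by have := hf i; linarith))) (fun i hi => ?_)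
      have hfi := hf i
      have hile : ((i : ℕ) : ℝ) ≤ x := by
        rw [hxdef]
        have h2 : i ≤ l := (Finset.mem_Icc.1 hi).2
        exact_mod_cast h2
      have hig : f i ≤ C * x ^ γ := by
        refine (hb' i).trans (mul_le_mul_of_nonneg_left ?_ hC.le)
        exact Real.rpow_le_rpow (by positivity) hile hγ0
      rw [hrdef, div_le_div_iff₀ (by linarith) hden]
      nlinarith
    calc term f lam l ≤ ∏ _i ∈ Finset.Icc 1 l, r := h
      _ = r ^ (l : ℕ) := by
          rw [Finset.prod_const, PNat.card_Icc]; simp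
  have step2 : r ^ (l : ℕ) ≤ Real.exp (-(c * x ^ ε)) := by
    have hr0 : 0 ≤ r := by positivity
    have hr1 : r ≤ Real.exp (-(lam / (lam + C * x ^ γ))) := by
      have h := Real.add_one_le_exp (-(lam / (lam + C * x ^ γ)))
      have hre : r = 1 - lam / (lam + C * x ^ γ) := by
        rw [hrdef]; field_simp; ring
      rw [hre]; linarith
    calc r ^ (l : ℕ) ≤ (Real.exp (-(lam / (lam + C * x ^ γ)))) ^ (l : ℕ) :=
          pow_le_pow_left₀ hr0 hr1 _
      _ = Real.exp ((l : ℕ) * (-(lam / (lam + C * x ^ γ)))) := (Real.exp_nat_mul _ _).symm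
      _ ≤ Real.exp (-(c * x ^ ε)) := by
          rw [Real.exp_le_exp]
          have hxsplit : x ^ γ * x ^ ε = x := by
            rw [← Real.rpow_add hx0]
            simp [hεdef]
          have hstep : lam + C * x ^ γ ≤ (lam + C) * x ^ γ := by nlinarith
          have hgoal : c * x ^ ε ≤ x * (lam / (lam + C * x ^ γ)) := by
            rw [hcdef, div_mul_eq_mul_div, ← mul_div_assoc,
              div_le_div_iff₀ (by linarith) hden]
            calc lam * x ^ ε * (lam + C * x ^ γ)
                ≤ lam * x ^ ε * ((lam + C) * x ^ γ) :=
                  mul_le_mul_of_nonneg_left hstep (by positivity)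
              _ = lam * (lam + C) * (x ^ γ * x ^ ε) := by ring
              _ = x * lam * (lam + C) := by rw [hxsplit]; ring
          rw [show ((l : ℕ) : ℝ) = x from rfl]
          linarith [hgoal]
  exact step1.trans step2

lemma continuousOn_rhoF (hf : ∀ k, 0 < f k)
    (hsum : ∀ lam : ℝ, 0 < lam → Summable (term f lam)) {a : ℝ} (ha : 0 < a) :
    ContinuousOn (rhoF f) (Set.Ioi a) := by
  have : ContinuousOn (fun x => ∑' l : ℕ+, term f x l) (Set.Ioi a) := by
    refine continuousOn_tsum (fun l => ?_) (hsum a ha) (fun l x hx => ?_)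
    · refine continuousOn_finset_prod _ (fun i _ => ?_)
      refine ContinuousOn.div continuousOn_const
        ((continuous_id.add continuous_const).continuousOn) (fun x hx => ?_)
      have h1 : a < x := hx
      have h2 := hf i
      exact ne_of_gt (by linarith)
    · have hx' : a < x := hx
      rw [Real.norm_eq_abs, abs_of_pos (term_pos hf (by linarith) l)]
      exact term_anti hf ha.le hx'.le l
  exact this

lemma rhoF_nonneg (hf : ∀ k, 0 < f k) {lam : ℝ} (hlam : 0 ≤ lam) : 0 ≤ rhoF f lam := by
  rw [rhoF_eq]
  exact tsum_nonneg (fun l => (term_pos hf hlam l).le)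

lemma strictAntiOn_rhoF (hf : ∀ k, 0 < f k)
    (hsum : ∀ lam : ℝ, 0 < lam → Summable (term f lam)) :
    StrictAntiOn (rhoF f) (Set.Ioi 0) := by
  intro x hx y hy hxy
  rw [rhoF_eq, rhoF_eq]
  have hx0 : (0 : ℝ) < x := hx
  exact Summable.tsum_lt_tsum (f := term f y) (g := term f x)
    (fun l => term_anti hf hx0.le hxy.le l)
    (term_strict_anti hf hx0.le hxy 1) (hsum y (hx0.trans hxy)) (hsum x hx0)

lemma tendsto_rhoF_atTop_zero (hf : ∀ k, 0 < f k)
    (hsum : ∀ lam : ℝ, 0 < lam → Summable (term f lam)) :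
    Tendsto (rhoF f) atTop (nhds 0) := by
  have hf1 := hf 1
  set K : ℝ := (1 + f 1) / f 1 * rhoF f 1 with hK
  have hK0 : 0 ≤ K := by
    have := rhoF_nonneg hf (le_refl (0:ℝ))
    have h1 : 0 ≤ rhoF f 1 := rhoF_nonneg hf one_pos.le
    positivity
  have key : ∀ x : ℝ, 1 ≤ x → rhoF f x ≤ f 1 * K / x := by
    intro x hx
    have hx0 : (0 : ℝ) < x := by linarith
    have perl : ∀ l : ℕ+, term f x l ≤ (f 1 / (x + f 1) * ((1 + f 1) / f 1)) * term f 1 l := by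
      intro l
      have h1mem : (1 : ℕ+) ∈ Finset.Icc 1 l := Finset.mem_Icc.2 ⟨le_refl _, l.one_le⟩
      have hx_expand : term f x l
          = f 1 / (x + f 1) * ∏ i ∈ (Finset.Icc 1 l).erase 1, f i / (x + f i) :=
        (Finset.mul_prod_erase _ _ h1mem).symm
      have h1_expand : term f 1 l
          = f 1 / (1 + f 1) * ∏ i ∈ (Finset.Icc 1 l).erase 1, f i / (1 + f i) :=
        (Finset.mul_prod_erase _ _ h1mem).symm
      have hprodle : ∏ i ∈ (Finset.Icc 1 l).erase 1, f i / (x + f i)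
          ≤ ∏ i ∈ (Finset.Icc 1 l).erase 1, f i / (1 + f i) := by
        refine Finset.prod_le_prod (fun i _ => ?_) (fun i _ => ?_)
        · exact le_of_lt (div_pos (hf i) (by have := hf i; linarith))
        · have hfi := hf i
          rw [div_le_div_iff₀ (by linarith) (by linarith)]
          nlinarith
      calc term f x l = f 1 / (x + f 1) * ∏ i ∈ (Finset.Icc 1 l).erase 1, f i / (x + f i) :=
            hx_expand
        _ ≤ f 1 / (x + f 1) * ∏ i ∈ (Finset.Icc 1 l).erase 1, f i / (1 + f i) := by
            refine mul_le_mul_of_nonneg_left hprodle (by positivity)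
        _ = (f 1 / (x + f 1) * ((1 + f 1) / f 1)) * term f 1 l := by
            rw [h1_expand]
            set P := ∏ i ∈ (Finset.Icc 1 l).erase 1, f i / (1 + f i) with hP
            field_simp
    have h2 : rhoF f x ≤ ∑' l : ℕ+, (f 1 / (x + f 1) * ((1 + f 1) / f 1)) * term f 1 l := by
      rw [rhoF_eq]
      exact Summable.tsum_le_tsum perl (hsum x hx0) ((hsum 1 one_pos).mul_left _)
    rw [tsum_mul_left] at h2
    have h3 : f 1 / (x + f 1) * ((1 + f 1) / f 1) * rhoF f 1 ≤ f 1 * K / x := by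
      rw [hK]
      have h1 : 0 ≤ rhoF f 1 := rhoF_nonneg hf one_pos.le
      have h4 : f 1 / (x + f 1) ≤ f 1 / x := by
        rw [div_le_div_iff₀ (by linarith) hx0]; nlinarith
      calc f 1 / (x + f 1) * ((1 + f 1) / f 1) * rhoF f 1
          ≤ f 1 / x * ((1 + f 1) / f 1) * rhoF f 1 := by
            refine mul_le_mul_of_nonneg_right (mul_le_mul_of_nonneg_right h4 (by positivity)) h1
        _ = f 1 * ((1 + f 1) / f 1 * rhoF f 1) / x := by ring
    rw [← rhoF_eq f 1] at h2
    exact h2.trans h3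
  refine squeeze_zero' (g := fun x => f 1 * K / x) ?_ ?_ ?_
  · filter_upwards [eventually_ge_atTop (1 : ℝ)] with x hx
    exact rhoF_nonneg hf (by linarith)
  · filter_upwards [eventually_ge_atTop (1 : ℝ)] with x hx
    exact key x hx
  · exact tendsto_const_nhds.div_atTop tendsto_id

lemma tendsto_rhoF_zero_atTop (hf : ∀ k, 0 < f k)
    (hsum : ∀ lam : ℝ, 0 < lam → Summable (term f lam)) :
    Tendsto (rhoF f) (nhdsWithin 0 (Set.Ioi 0)) atTop := by
  rw [tendsto_atTop]
  intro M
  obtain ⟨N, hN⟩ := exists_nat_ge (2 * M)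
  set Np : ℕ+ := ⟨N + 1, Nat.succ_pos N⟩ with hNp
  have ht : Tendsto (fun x => term f x Np) (nhdsWithin 0 (Set.Ioi 0)) (nhds 1) := by
    have h1 : Tendsto (fun x : ℝ => term f x Np) (nhds 0)
        (nhds (∏ i ∈ Finset.Icc 1 Np, f i / (0 + f i))) := by
      simp only [term]
      refine tendsto_finset_prod _ (fun i _ => ?_)
      refine Filter.Tendsto.div tendsto_const_nhds ?_ (by simpa using (hf i).ne')
      simpa using (continuous_add_right (f i)).tendsto (0 : ℝ)
    have h2 : (∏ i ∈ Finset.Icc 1 Np, f i / (0 + f i)) = 1 := by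
      refine Finset.prod_eq_one (fun i _ => ?_)
      rw [zero_add, div_self (hf i).ne']
    rw [h2] at h1
    exact h1.mono_left nhdsWithin_le_nhds
  have hev1 : ∀ᶠ x in nhdsWithin 0 (Set.Ioi 0), (1 : ℝ) / 2 ≤ term f x Np :=
    ht.eventually (eventually_ge_nhds (by norm_num))
  filter_upwards [hev1, self_mem_nhdsWithin] with x h12 hx
  have hx0 : (0 : ℝ) < x := hx
  have hterm_ge : ∀ l ∈ Finset.Icc 1 Np, (1 : ℝ) / 2 ≤ term f x l := by
    intro l hl
    refine le_trans h12 ?_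
    have hsub : Finset.Icc 1 l ⊆ Finset.Icc 1 Np :=
      Finset.Icc_subset_Icc_right (Finset.mem_Icc.1 hl).2
    have hexp : (∏ i ∈ Finset.Icc 1 Np \ Finset.Icc 1 l, f i / (x + f i)) * term f x l
        = term f x Np := by
      simp only [term]
      exact Finset.prod_sdiff hsub
    have hle1 : (∏ i ∈ Finset.Icc 1 Np \ Finset.Icc 1 l, f i / (x + f i)) ≤ 1 :=
      Finset.prod_le_one
        (fun i _ => le_of_lt (div_pos (hf i) (by have := hf i; linarith)))
        (fun i _ => by
          have := hf i
          rw [div_le_one (by linarith)]; linarith)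
    calc term f x Np = _ * term f x l := hexp.symm
      _ ≤ 1 * term f x l := mul_le_mul_of_nonneg_right hle1 (term_pos hf hx0.le l).le
      _ = term f x l := one_mul _
  have hsumx := hsum x hx0
  have hcard : (((Finset.Icc 1 Np).card : ℕ) : ℝ) = (N : ℝ) + 1 := by
    rw [PNat.card_Icc]
    simp [hNp]
  calc M ≤ (((Finset.Icc 1 Np).card : ℕ) : ℝ) * (1 / 2) := by rw [hcard]; linarith
    _ ≤ ∑ l ∈ Finset.Icc 1 Np, term f x l := by
        have := Finset.card_nsmul_le_sum (Finset.Icc 1 Np) (term f x) ((1 : ℝ) / 2) hterm_ge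
        simpa [nsmul_eq_mul] using this
    _ ≤ rhoF f x := by
        rw [rhoF_eq]
        exact Summable.sum_le_tsum _ (fun l _ => (term_pos hf hx0.le l).le) hsumx

lemma existsUnique_rhoF (hf : ∀ k, 0 < f k)
    (hsum : ∀ lam : ℝ, 0 < lam → Summable (term f lam)) :
    ∃! lam : ℝ, 0 < lam ∧ rhoF f lam = 1 := by
  have htop := tendsto_rhoF_zero_atTop hf hsum
  have h0 := tendsto_rhoF_atTop_zero hf hsum
  have hev2 : ∀ᶠ x in nhdsWithin 0 (Set.Ioi 0), 2 ≤ rhoF f x := htop.eventually_ge_atTop 2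
  obtain ⟨a, ha2, ha0⟩ := (hev2.and self_mem_nhdsWithin).exists
  have ha0' : (0 : ℝ) < a := ha0
  have hev3 : ∀ᶠ x in atTop, rhoF f x < 1 / 2 := h0.eventually_lt_const (by norm_num)
  obtain ⟨b, hbhalf, hab⟩ := (hev3.and (eventually_gt_atTop a)).exists
  have hcont : ContinuousOn (rhoF f) (Set.Icc a b) :=
    (continuousOn_rhoF hf hsum (half_pos ha0')).mono
      (fun x hx => lt_of_lt_of_le (by linarith) hx.1)
  have h1mem : (1 : ℝ) ∈ Set.Icc (rhoF f b) (rhoF f a) := ⟨by linarith, by linarith⟩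
  obtain ⟨lam, hlam_mem, hlam_eq⟩ := intermediate_value_Icc' hab.le hcont h1mem
  have hlam0 : 0 < lam := lt_of_lt_of_le ha0' hlam_mem.1
  refine ⟨lam, ⟨hlam0, hlam_eq⟩, fun y hy => ?_⟩
  exact (strictAntiOn_rhoF hf hsum).injOn (Set.mem_Ioi.2 hy.1) (Set.mem_Ioi.2 hlam0)
    (by rw [hy.2, hlam_eq])

end Stmt4Aux

/-- If `f : ℕ₊ → (0,∞)` satisfies `f k ≤ C k^β` for all `k`, for some
`C > 0` and `β < 1`, then `λ ↦ ρ_f(λ)` is finite (the series converges) and strictly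
decreasing on `(0,∞)`, tends to `+∞` as `λ ↓ 0` and to `0` as `λ → ∞`; consequently
there exists a unique `λ* ∈ (0,∞)` with `ρ_f(λ*) = 1` (the Malthusian parameter). -/
theorem stmt_4 (f : ℕ+ → ℝ) (hf : ∀ k, 0 < f k)
    (C β : ℝ) (hC : 0 < C) (hβ : β < 1)
    (hbound : ∀ k : ℕ+, f k ≤ C * (k : ℝ) ^ β) :
    (∀ lam : ℝ, 0 < lam →
        Summable (fun l : ℕ+ => ∏ i ∈ Finset.Icc 1 l, f i / (lam + f i))) ∧
    StrictAntiOn (rhoF f) (Set.Ioi 0) ∧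
    Filter.Tendsto (rhoF f) (nhdsWithin 0 (Set.Ioi 0)) Filter.atTop ∧
    Filter.Tendsto (rhoF f) Filter.atTop (nhds 0) ∧
    (∃! lam : ℝ, 0 < lam ∧ rhoF f lam = 1) := by
  have hsum : ∀ lam : ℝ, 0 < lam → Summable (Stmt4Aux.term f lam) :=
    fun lam h => Stmt4Aux.summable_term hf hC hβ hbound h
  exact ⟨fun lam h => hsum lam h, Stmt4Aux.strictAntiOn_rhoF hf hsum,
    Stmt4Aux.tendsto_rhoF_zero_atTop hf hsum, Stmt4Aux.tendsto_rhoF_atTop_zero hf hsum,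
    Stmt4Aux.existsUnique_rhoF hf hsum⟩
end

section
/- Let α > −1 and f(k) = k + α for k ∈ ℕ₊. Then for every λ > 1, ρ_f(λ) = Σ_{l=1}^{∞} ∏_{k=1}^{l} (k + α)/(λ + k + α) = (1 + α)/(λ − 1). In particular, λ* = 2 + α is the unique λ > 1 with ρ_f(λ) = 1. -/
section Aux

variable (α lam : ℝ)

/-- bridge from PNat products to Nat products -/
lemma aux_bridge (l : ℕ+) :
    (∏ k ∈ Finset.Icc (1:ℕ+) l, ((k : ℝ) + α) / (lam + (k : ℝ) + α))
      = ∏ k ∈ Finset.Icc 1 (l:ℕ), ((k : ℝ) + α) / (lam + (k : ℝ) + α) := by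
  have h : Finset.Icc (1:ℕ) (l:ℕ)
      = (Finset.Icc (1:ℕ+) l).map (Function.Embedding.subtype _) := by
    rw [PNat.map_subtype_embedding_Icc, PNat.one_coe]
  rw [h]; exact (Finset.prod_map (Finset.Icc (1:ℕ+) l) (Function.Embedding.subtype fun n : ℕ => 0 < n) (fun k : ℕ => ((k : ℝ) + α) / (lam + (k : ℝ) + α))).symm

variable {α lam}

noncomputable def auxP (α lam : ℝ) (n : ℕ) : ℝ :=
  ∏ k ∈ Finset.Icc 1 n, ((k : ℝ) + α) / (lam + (k : ℝ) + α)

noncomputable def auxT (α lam : ℝ) (n : ℕ) : ℝ := auxP α lam n * ((n : ℝ) + 1 + α) / (lam - 1)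

lemma auxP_pos (hα : -1 < α) (hlam : 1 < lam) (n : ℕ) : 0 < auxP α lam n := by
  apply Finset.prod_pos
  intro k hk
  have hk1 : 1 ≤ k := (Finset.mem_Icc.mp hk).1
  have h1 : (1:ℝ) ≤ (k:ℝ) := by exact_mod_cast hk1
  apply div_pos <;> nlinarith

lemma auxP_succ (n : ℕ) :
    auxP α lam (n+1) = auxP α lam n * (((n:ℝ)+1) + α) / (lam + ((n:ℝ)+1) + α) := by
  unfold auxP
  rw [Finset.prod_Icc_succ_top (by omega)]
  push_cast
  ring

lemma auxT_sub (hα : -1 < α) (hlam : 1 < lam) (n : ℕ) :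
    auxT α lam n - auxT α lam (n+1) = auxP α lam (n+1) := by
  have hn : (0:ℝ) < lam + ((n:ℝ)+1) + α := by
    have : (0:ℝ) ≤ (n:ℝ) := Nat.cast_nonneg n
    nlinarith
  have h1 : lam - 1 ≠ 0 := by nlinarith
  have h2 : lam + ((n:ℝ)+1) + α ≠ 0 := ne_of_gt hn
  unfold auxT
  rw [auxP_succ]
  push_cast
  field_simp
  ring

lemma auxT_pos (hα : -1 < α) (hlam : 1 < lam) (n : ℕ) : 0 < auxT α lam n := by
  unfold auxT
  have := auxP_pos hα hlam n
  have : (0:ℝ) ≤ (n:ℝ) := Nat.cast_nonneg n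
  apply div_pos
  · nlinarith [auxP_pos (α := α) (lam := lam) hα hlam n]
  · linarith

lemma aux_telescope (hα : -1 < α) (hlam : 1 < lam) (N : ℕ) :
    ∑ i ∈ Finset.range N, auxP α lam (i+1) = auxT α lam 0 - auxT α lam N := by
  rw [← Finset.sum_range_sub' (auxT α lam) N]
  exact Finset.sum_congr rfl fun i _ => (auxT_sub hα hlam i).symm

lemma auxT_zero : auxT α lam 0 = (1 + α) / (lam - 1) := by
  unfold auxT auxP
  simp

lemma aux_summable (hα : -1 < α) (hlam : 1 < lam) : Summable (fun n : ℕ => auxP α lam (n+1)) := by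
  apply summable_of_sum_range_le (c := auxT α lam 0)
  · intro n; exact (auxP_pos hα hlam _).le
  · intro n
    rw [aux_telescope hα hlam]
    have := auxT_pos hα hlam n
    linarith

lemma auxT_tendsto_zero (hα : -1 < α) (hlam : 1 < lam) :
    Filter.Tendsto (auxT α lam) Filter.atTop (nhds 0) := by
  have hanti : Antitone (auxT α lam) := by
    apply antitone_nat_of_succ_le
    intro n
    have := auxT_sub hα hlam n
    have := auxP_pos hα hlam (n+1)
    linarith
  have hbdd : BddBelow (Set.range (auxT α lam)) := by
    refine ⟨0, ?_⟩
    rintro x ⟨n, rfl⟩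
    exact (auxT_pos hα hlam n).le
  have htend := tendsto_atTop_ciInf hanti hbdd
  set t := ⨅ n, auxT α lam n with ht
  have ht0 : 0 ≤ t := le_ciInf fun n => (auxT_pos hα hlam n).le
  have htle : ∀ n, t ≤ auxT α lam n := fun n => ciInf_le hbdd n
  rcases eq_or_lt_of_le ht0 with h | h
  · rwa [← h] at htend
  · exfalso
    -- P(n+1) ≥ t (lam-1)/(n+2+α), contradicting summability
    have hle : ∀ n : ℕ, t * (lam - 1) / ((n:ℝ) + 2 + α) ≤ auxP α lam (n+1) := by
      intro n
      have h1 := htle (n+1)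
      have hd : (0:ℝ) < (n:ℝ) + 2 + α := by
        have : (0:ℝ) ≤ (n:ℝ) := Nat.cast_nonneg n
        nlinarith
      have h2 : t ≤ auxP α lam (n+1) * ((n:ℝ) + 2 + α) / (lam - 1) := by
        have heq : auxT α lam (n+1) = auxP α lam (n+1) * (((n+1:ℕ):ℝ) + 1 + α) / (lam - 1) := rfl
        rw [heq] at h1
        push_cast at h1
        have e : auxP α lam (n+1) * ((n:ℝ) + 2 + α) / (lam - 1)
            = auxP α lam (n+1) * ((n:ℝ) + 1 + 1 + α) / (lam - 1) := by ring
        rw [e]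
        exact h1
      rw [le_div_iff₀ (by linarith)] at h2
      rw [div_le_iff₀ hd]
      linarith
    have hsum1 : Summable (fun n : ℕ => t * (lam - 1) / ((n:ℝ) + 2 + α)) := by
      apply Summable.of_nonneg_of_le _ hle (aux_summable hα hlam)
      intro n
      have hd : (0:ℝ) < (n:ℝ) + 2 + α := by
        have : (0:ℝ) ≤ (n:ℝ) := Nat.cast_nonneg n
        nlinarith
      exact div_nonneg (by nlinarith) hd.le
    have hc : t * (lam - 1) ≠ 0 := ne_of_gt (mul_pos h (by linarith))
    have hsum2 : Summable (fun n : ℕ => ((n:ℝ) + 2 + α)⁻¹) := by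
      have he : (fun n : ℕ => t * (lam - 1) / ((n:ℝ) + 2 + α))
          = fun n : ℕ => t * (lam - 1) * ((n:ℝ) + 2 + α)⁻¹ := by
        funext n; rw [div_eq_mul_inv]
      rw [he] at hsum1
      exact (summable_mul_left_iff hc).mp hsum1
    have hsum3 : Summable (fun n : ℕ => (2 + α)⁻¹ * ((n:ℝ) + 1)⁻¹) := by
      apply Summable.of_nonneg_of_le _ _ hsum2
      · intro n
        have : (0:ℝ) < 2 + α := by linarith
        positivity
      · intro n
        have hn : (0:ℝ) ≤ (n:ℝ) := Nat.cast_nonneg n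
        have h2 : (0:ℝ) < 2 + α := by linarith
        rw [← mul_inv, inv_le_inv₀ (by nlinarith) (by nlinarith)]
        nlinarith
    have hsum4 : Summable (fun n : ℕ => ((n:ℝ) + 1)⁻¹) := by
      have h2 : ((2 + α : ℝ))⁻¹ ≠ 0 := inv_ne_zero (ne_of_gt (by linarith))
      exact (summable_mul_left_iff h2).mp hsum3
    have : Summable (fun n : ℕ => ((n:ℝ))⁻¹) := by
      rw [← summable_nat_add_iff 1]
      convert hsum4 using 2 with n
      · rfl
      push_cast
      ring
    exact Real.not_summable_natCast_inv this

lemma aux_tsum_s5 (hα : -1 < α) (hlam : 1 < lam) : (∑' n : ℕ, auxP α lam (n+1)) = (1 + α) / (lam - 1) := by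
  have hs := aux_summable hα hlam
  have h1 := hs.hasSum.tendsto_sum_nat
  have h2 : Filter.Tendsto (fun N => ∑ i ∈ Finset.range N, auxP α lam (i+1))
      Filter.atTop (nhds (auxT α lam 0)) := by
    have : (fun N => ∑ i ∈ Finset.range N, auxP α lam (i+1))
        = fun N => auxT α lam 0 - auxT α lam N := by
      funext N; exact aux_telescope hα hlam N
    rw [this]
    have := (auxT_tendsto_zero hα hlam).const_sub (auxT α lam 0)
    simpa using this
  have := tendsto_nhds_unique h1 h2
  rw [this, auxT_zero]

end Aux

/-- For the affine PA function `f(k) = k + α` with `α > −1`, for every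
`λ > 1` the series `ρ_f(λ) = Σ_{l=1}^∞ ∏_{k=1}^l (k+α)/(λ+k+α)` converges with sum
`(1+α)/(λ−1)`; in particular `λ* = 2 + α` is the unique `λ > 1` with `ρ_f(λ) = 1`. -/
theorem stmt_5 (α : ℝ) (hα : -1 < α) :
    (∀ lam : ℝ, 1 < lam →
      Summable (fun l : ℕ+ => ∏ k ∈ Finset.Icc 1 l, ((k : ℝ) + α) / (lam + (k : ℝ) + α)) ∧
      (∑' l : ℕ+, ∏ k ∈ Finset.Icc 1 l, ((k : ℝ) + α) / (lam + (k : ℝ) + α))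
        = (1 + α) / (lam - 1)) ∧
    (∀ lam : ℝ,
      (1 < lam ∧
        (∑' l : ℕ+, ∏ k ∈ Finset.Icc 1 l, ((k : ℝ) + α) / (lam + (k : ℝ) + α)) = 1)
      ↔ lam = 2 + α) := by
  have main : ∀ lam : ℝ, 1 < lam →
      Summable (fun l : ℕ+ => ∏ k ∈ Finset.Icc 1 l, ((k : ℝ) + α) / (lam + (k : ℝ) + α)) ∧
      (∑' l : ℕ+, ∏ k ∈ Finset.Icc 1 l, ((k : ℝ) + α) / (lam + (k : ℝ) + α))
        = (1 + α) / (lam - 1) := by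
    intro lam hlam
    set g : ℕ+ → ℝ := fun l => ∏ k ∈ Finset.Icc 1 l, ((k : ℝ) + α) / (lam + (k : ℝ) + α)
      with hg
    have hge : (g ∘ Equiv.pnatEquivNat.symm) = fun n : ℕ => auxP α lam (n+1) := by
      funext n
      show g n.succPNat = _
      rw [hg]
      simp only
      rw [aux_bridge α lam n.succPNat, Nat.succPNat_coe]
      rfl
    have hS : Summable g := by
      rw [← Equiv.summable_iff (Equiv.pnatEquivNat.symm), hge]
      exact aux_summable hα hlam
    refine ⟨hS, ?_⟩
    have ht := Equiv.tsum_eq (Equiv.pnatEquivNat.symm) g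
    rw [← ht]
    rw [show (∑' n : ℕ, g (Equiv.pnatEquivNat.symm n))
        = ∑' n : ℕ, auxP α lam (n+1) from congrArg tsum hge]
    exact aux_tsum_s5 hα hlam
  refine ⟨main, fun lam => ?_⟩
  constructor
  · rintro ⟨hlam, hsum⟩
    have h2 := (main lam hlam).2
    rw [hsum] at h2
    have hne : lam - 1 ≠ 0 := by intro h; rw [h] at h2; simp at h2
    field_simp at h2
    linarith
  · rintro rfl
    have hlam : (1:ℝ) < 2 + α := by linarith
    refine ⟨hlam, ?_⟩
    rw [(main _ hlam).2]
    rw [show (2 + α - 1 : ℝ) = 1 + α by ring]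
    exact div_self (by linarith)
end

section
/- Let f: ℕ₊ → (0,∞) and let λ* > 0 satisfy Σ_{l=1}^{∞} ∏_{k=1}^{l} f(k)/(λ* + f(k)) = 1, and define p_k = (λ*/(λ* + f(k))) ∏_{j=1}^{k−1} f(j)/(λ* + f(j)). Then λ* = Σ_{j=1}^{∞} f(j) p_j, and for every k ≥ 1, p_{>k} := Σ_{l>k} p_l = f(k) p_k / Σ_{j=1}^{∞} f(j) p_j. -/
/-- If `λ* > 0` satisfies `Σ_{l=1}^∞ ∏_{k=1}^l f(k)/(λ*+f(k)) = 1` and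
`p_k = (λ*/(λ*+f(k))) ∏_{j=1}^{k−1} f(j)/(λ*+f(j))`, then `λ* = Σ_{j=1}^∞ f(j) p_j`
and for every `k ≥ 1`, `p_{>k} = Σ_{l>k} p_l = f(k) p_k / Σ_{j=1}^∞ f(j) p_j`. -/
theorem stmt_7 (f : ℕ → ℝ) (hf : ∀ k, 1 ≤ k → 0 < f k)
    (lam : ℝ) (hlam : 0 < lam)
    (hsum : Summable (fun l : ℕ => ∏ k ∈ Finset.Icc 1 (l + 1), f k / (lam + f k)))
    (hone : (∑' l : ℕ, ∏ k ∈ Finset.Icc 1 (l + 1), f k / (lam + f k)) = 1)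
    (p : ℕ → ℝ)
    (hp : ∀ k, 1 ≤ k →
      p k = lam / (lam + f k) * ∏ j ∈ Finset.Icc 1 (k - 1), f j / (lam + f j)) :
    Summable (fun j : ℕ => f (j + 1) * p (j + 1)) ∧
    lam = (∑' j : ℕ, f (j + 1) * p (j + 1)) ∧
    (∀ k, 1 ≤ k →
      (∑' l : ℕ, p (k + 1 + l)) = f k * p k / ∑' j : ℕ, f (j + 1) * p (j + 1)) := by
  set π : ℕ → ℝ := fun l => ∏ k ∈ Finset.Icc 1 l, f k / (lam + f k) with hπ
  have hne : ∀ k, 1 ≤ k → lam + f k ≠ 0 := fun k hk =>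
    ne_of_gt (add_pos hlam (hf k hk))
  have hπ0 : π 0 = 1 := by simp [hπ]
  have hπsucc : ∀ l : ℕ, π (l + 1) = π l * (f (l + 1) / (lam + f (l + 1))) := by
    intro l
    simp only [hπ]
    rw [Finset.prod_Icc_succ_top (Nat.le_add_left 1 l)]
  -- f k * p k = lam * π k
  have hstep : ∀ k, 1 ≤ k → π k = π (k - 1) * (f k / (lam + f k)) := by
    intro k hk
    have e : k - 1 + 1 = k := by omega
    conv_lhs => rw [← e]
    rw [hπsucc, e]
  have hd : ∀ k : ℕ, (∏ j ∈ Finset.Icc 1 (k - 1), f j / (lam + f j)) = π (k - 1) :=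
    fun k => rfl
  have hfp : ∀ k, 1 ≤ k → f k * p k = lam * π k := by
    intro k hk
    rw [hp _ hk, hd, hstep k hk]
    have := hne k hk
    field_simp
  -- p k = π (k-1) - π k
  have hpdiff : ∀ k, 1 ≤ k → p k = π (k - 1) - π k := by
    intro k hk
    rw [hp _ hk, hd, hstep k hk]
    have := hne k hk
    field_simp
    ring
  have hsum' : Summable (fun l : ℕ => π (l + 1)) := hsum
  have hPi : Summable π := (summable_nat_add_iff 1).mp hsum'
  have hfp' : (fun j : ℕ => f (j + 1) * p (j + 1)) = fun j => lam * π (j + 1) := by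
    funext j; exact hfp (j + 1) (by omega)
  have hS : Summable (fun j : ℕ => f (j + 1) * p (j + 1)) := by
    rw [hfp']; exact hsum'.mul_left lam
  have htsum : (∑' j : ℕ, f (j + 1) * p (j + 1)) = lam := by
    rw [hfp', tsum_mul_left]
    have : (∑' l : ℕ, π (l + 1)) = 1 := hone
    rw [this, mul_one]
  refine ⟨hS, htsum.symm, ?_⟩
  intro k hk
  rw [htsum]
  -- tail sum equals π k
  have htend : Filter.Tendsto π Filter.atTop (nhds 0) := hPi.tendsto_atTop_zero
  have hg : Summable (fun l : ℕ => π (k + l)) := by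
    have := (summable_nat_add_iff k).mpr hPi
    simpa [Nat.add_comm] using this
  have hg1 : Summable (fun l : ℕ => π (k + (l + 1))) := by
    have := (summable_nat_add_iff (k + 1)).mpr hPi
    simpa [Nat.add_comm, Nat.add_assoc, Nat.add_left_comm] using this
  have hdiff : Summable (fun l : ℕ => π (k + l) - π (k + (l + 1))) := hg.sub hg1
  have hps : (fun l : ℕ => p (k + 1 + l)) = fun l => π (k + l) - π (k + (l + 1)) := by
    funext l
    have h1 : k + 1 + l - 1 = k + l := by omega
    have h2 : k + 1 + l = k + (l + 1) := by omega
    rw [hpdiff (k + 1 + l) (by omega), h1, h2]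
  have hgtend : Filter.Tendsto (fun n : ℕ => π (k + n)) Filter.atTop (nhds 0) := by
    have := htend.comp (Filter.tendsto_add_atTop_nat k)
    simpa [Function.comp_def, Nat.add_comm] using this
  have hhs : HasSum (fun l : ℕ => π (k + l) - π (k + (l + 1))) (π k) := by
    rw [hdiff.hasSum_iff_tendsto_nat]
    have hps2 : ∀ n : ℕ, ∑ i ∈ Finset.range n, (π (k + i) - π (k + (i + 1)))
        = π (k + 0) - π (k + n) := by
      intro n
      exact Finset.sum_range_sub' (fun i => π (k + i)) n
    simp only [hps2, Nat.add_zero]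
    have : Filter.Tendsto (fun n : ℕ => π k - π (k + n)) Filter.atTop (nhds (π k - 0)) :=
      Filter.Tendsto.sub tendsto_const_nhds hgtend
    simpa using this
  rw [hps, hhs.tsum_eq, hfp k hk]
  field_simp
end

section
/- Let f₀: ℕ₊ → (0,∞) and let (p_k)_{k≥1} be a probability distribution on ℕ₊ with p_k > 0 for every k, λ* := Σ_j f₀(j) p_j < ∞, and p_{>k} := Σ_{l>k} p_l = f₀(k) p_k / λ* for all k ≥ 1; assume Σ_k |log f₀(k)| p_{>k} < ∞. For any f: ℕ₊ → (0,∞) with Σ_k |log f(k)| p_{>k} < ∞ and Σ_k f(k) p_k < ∞, define ι(f) = Σ_{k=1}^{∞} (log f(k)) p_{>k} − log(Σ_{k=1}^{∞} f(k) p_k). Then ι(f) ≤ ι(f₀), with equality if and only if there is a constant c > 0 such that f(k) = c f₀(k) for every k ∈ ℕ₊. -/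
/-- Jensen inequality for `log` over a countable probability vector, with equality case. -/
theorem jensen_log_aux (q g : ℕ → ℝ) (hq : ∀ k, 0 < q k) (hg : ∀ k, 0 < g k)
    (hqs : Summable q) (hq1 : (∑' k, q k) = 1)
    (hgs : Summable (fun k => q k * g k))
    (hls : Summable (fun k => Real.log (g k) * q k)) :
    (∑' k, Real.log (g k) * q k) ≤ Real.log (∑' k, q k * g k) ∧
    ((∑' k, Real.log (g k) * q k) = Real.log (∑' k, q k * g k) ↔
      ∀ k, g k = ∑' j, q j * g j) := by
  set S : ℝ := ∑' k, q k * g k with hSdef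
  have hSpos : 0 < S :=
    Summable.tsum_pos hgs (fun k => (mul_pos (hq k) (hg k)).le) 0 (mul_pos (hq 0) (hg 0))
  have hSne : S ≠ 0 := hSpos.ne'
  set T : ℝ := ∑' k, Real.log (g k) * q k with hTdef
  have hterm_eq : (fun k => q k * (g k / S - 1 - Real.log (g k / S)))
      = fun k => q k * g k / S - q k - Real.log (g k) * q k + Real.log S * q k := by
    funext k
    rw [Real.log_div (hg k).ne' hSne]
    ring
  have hsum_term : Summable (fun k => q k * (g k / S - 1 - Real.log (g k / S))) := by
    rw [hterm_eq]
    exact (((hgs.div_const S).sub hqs).sub hls).add (hqs.mul_left _)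
  have hnn : ∀ k, 0 ≤ q k * (g k / S - 1 - Real.log (g k / S)) := by
    intro k
    have := Real.log_le_sub_one_of_pos (div_pos (hg k) hSpos)
    have h2 : (0:ℝ) ≤ g k / S - 1 - Real.log (g k / S) := by linarith
    exact mul_nonneg (hq k).le h2
  have htsum : (∑' k, q k * (g k / S - 1 - Real.log (g k / S))) = Real.log S - T := by
    rw [hterm_eq]
    rw [Summable.tsum_add (((hgs.div_const S).sub hqs).sub hls) (hqs.mul_left _)]
    rw [Summable.tsum_sub ((hgs.div_const S).sub hqs) hls]
    rw [Summable.tsum_sub (hgs.div_const S) hqs]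
    rw [tsum_div_const, tsum_mul_left, hq1, ← hSdef, div_self hSne, ← hTdef]
    ring
  have hDnn : 0 ≤ Real.log S - T := htsum ▸ tsum_nonneg hnn
  refine ⟨by linarith, ?_, ?_⟩
  · -- equality → g constant
    intro hEq
    have hD0 : (∑' k, q k * (g k / S - 1 - Real.log (g k / S))) = 0 := by
      rw [htsum, hEq]; ring
    intro k
    have hle : q k * (g k / S - 1 - Real.log (g k / S)) ≤ 0 := by
      rw [← hD0]
      exact Summable.le_tsum hsum_term k (fun j _ => hnn j)
    have h0 : q k * (g k / S - 1 - Real.log (g k / S)) = 0 := le_antisymm hle (hnn k)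
    have h1 : g k / S - 1 - Real.log (g k / S) = 0 := by
      rcases mul_eq_zero.mp h0 with h | h
      · exact absurd h (hq k).ne'
      · exact h
    by_contra hne
    have hx : g k / S ≠ 1 := by
      intro hc
      exact hne ((div_eq_one_iff_eq hSne).mp hc)
    have := Real.log_lt_sub_one_of_pos (div_pos (hg k) hSpos) hx
    linarith
  · -- g constant → equality
    intro hgc
    have hTc : T = Real.log S := by
      rw [hTdef]
      have : (fun k => Real.log (g k) * q k) = fun k => Real.log S * q k := by
        funext k; rw [hgc k]
      rw [this, tsum_mul_left, hq1, mul_one]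
    rw [hTc]

/-- With `(p_k)` a positive probability distribution on ℕ₊ satisfying
`p_{>k} = f₀(k) p_k / λ*` where `λ* = Σ_j f₀(j) p_j`, the limiting log-likelihood
functional `ι(f) = Σ_k log f(k) p_{>k} − log(Σ_k f(k) p_k)` is maximized at `f₀`:
`ι(f) ≤ ι(f₀)` with equality iff `f = c f₀` for some constant `c > 0`. -/
theorem stmt_13 (f₀ : ℕ → ℝ) (hf₀ : ∀ k, 1 ≤ k → 0 < f₀ k)
    (p : ℕ → ℝ) (hp0 : ∀ k, 1 ≤ k → 0 < p k)
    (hpsum : Summable (fun k : ℕ => p (k + 1)))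
    (hp1 : (∑' k : ℕ, p (k + 1)) = 1)
    (hf₀p : Summable (fun j : ℕ => f₀ (j + 1) * p (j + 1)))
    (lam : ℝ) (hlam : lam = ∑' j : ℕ, f₀ (j + 1) * p (j + 1))
    (P : ℕ → ℝ) (hP : ∀ k, 1 ≤ k → P k = ∑' l : ℕ, p (k + 1 + l))
    (hPid : ∀ k, 1 ≤ k → P k = f₀ k * p k / lam)
    (hlog₀ : Summable (fun k : ℕ => |Real.log (f₀ (k + 1))| * P (k + 1)))
    (f : ℕ → ℝ) (hf : ∀ k, 1 ≤ k → 0 < f k)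
    (hlogf : Summable (fun k : ℕ => |Real.log (f (k + 1))| * P (k + 1)))
    (hfp : Summable (fun k : ℕ => f (k + 1) * p (k + 1))) :
    ((∑' k : ℕ, Real.log (f (k + 1)) * P (k + 1))
        - Real.log (∑' k : ℕ, f (k + 1) * p (k + 1)))
      ≤ ((∑' k : ℕ, Real.log (f₀ (k + 1)) * P (k + 1))
        - Real.log (∑' k : ℕ, f₀ (k + 1) * p (k + 1))) ∧
    (((∑' k : ℕ, Real.log (f (k + 1)) * P (k + 1))
        - Real.log (∑' k : ℕ, f (k + 1) * p (k + 1)))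
      = ((∑' k : ℕ, Real.log (f₀ (k + 1)) * P (k + 1))
        - Real.log (∑' k : ℕ, f₀ (k + 1) * p (k + 1)))
      ↔ ∃ c : ℝ, 0 < c ∧ ∀ k, 1 ≤ k → f k = c * f₀ k) := by
  have h1 : ∀ k : ℕ, (1:ℕ) ≤ k + 1 := fun k => Nat.le_add_left 1 k
  have hlampos : 0 < lam := by
    rw [hlam]
    exact Summable.tsum_pos hf₀p (fun i => (mul_pos (hf₀ _ (h1 i)) (hp0 _ (h1 i))).le) 0
      (mul_pos (hf₀ 1 le_rfl) (hp0 1 le_rfl))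
  have hlamne : lam ≠ 0 := hlampos.ne'
  have hQ : ∀ k : ℕ, P (k + 1) = f₀ (k + 1) * p (k + 1) / lam := fun k => hPid (k + 1) (h1 k)
  have hqpos : ∀ k, 0 < P (k + 1) := fun k => by
    rw [hQ]; exact div_pos (mul_pos (hf₀ _ (h1 k)) (hp0 _ (h1 k))) hlampos
  have hqfun : (fun k : ℕ => P (k + 1)) = fun k => f₀ (k + 1) * p (k + 1) / lam :=
    funext hQ
  have hqs : Summable (fun k : ℕ => P (k + 1)) := by
    rw [hqfun]; exact hf₀p.div_const lam
  have hq1 : (∑' k : ℕ, P (k + 1)) = 1 := by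
    rw [hqfun, tsum_div_const, ← hlam, div_self hlamne]
  set g : ℕ → ℝ := fun k => f (k + 1) / f₀ (k + 1) with hgdef
  have hgpos : ∀ k, 0 < g k := fun k => div_pos (hf _ (h1 k)) (hf₀ _ (h1 k))
  have hqg : ∀ k, P (k + 1) * g k = f (k + 1) * p (k + 1) / lam := by
    intro k
    have h0 : f₀ (k + 1) ≠ 0 := (hf₀ _ (h1 k)).ne'
    rw [hQ, hgdef]
    field_simp
  have hqgfun : (fun k : ℕ => P (k + 1) * g k) = fun k => f (k + 1) * p (k + 1) / lam :=
    funext hqg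
  have hgs : Summable (fun k : ℕ => P (k + 1) * g k) := by
    rw [hqgfun]; exact hfp.div_const lam
  -- summability of log terms
  have habs : ∀ (F : ℕ → ℝ), Summable (fun k : ℕ => |Real.log (F (k + 1))| * P (k + 1)) →
      Summable (fun k : ℕ => Real.log (F (k + 1)) * P (k + 1)) := by
    intro F hS
    apply Summable.of_abs
    have : (fun k : ℕ => |Real.log (F (k + 1)) * P (k + 1)|)
        = fun k => |Real.log (F (k + 1))| * P (k + 1) := by
      funext k; rw [abs_mul, abs_of_pos (hqpos k)]
    rw [this]; exact hS
  have hA : Summable (fun k : ℕ => Real.log (f (k + 1)) * P (k + 1)) := habs f hlogf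
  have hB : Summable (fun k : ℕ => Real.log (f₀ (k + 1)) * P (k + 1)) := habs f₀ hlog₀
  have hlogg : (fun k : ℕ => Real.log (g k) * P (k + 1))
      = fun k => Real.log (f (k + 1)) * P (k + 1) - Real.log (f₀ (k + 1)) * P (k + 1) := by
    funext k
    rw [hgdef]
    rw [Real.log_div (hf _ (h1 k)).ne' (hf₀ _ (h1 k)).ne']
    ring
  have hls : Summable (fun k : ℕ => Real.log (g k) * P (k + 1)) := by
    rw [hlogg]; exact hA.sub hB
  have hT : (∑' k : ℕ, Real.log (g k) * P (k + 1))
      = (∑' k : ℕ, Real.log (f (k + 1)) * P (k + 1))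
        - ∑' k : ℕ, Real.log (f₀ (k + 1)) * P (k + 1) := by
    rw [hlogg]; exact Summable.tsum_sub hA hB
  -- sum f p = lam * S
  set S : ℝ := ∑' k : ℕ, P (k + 1) * g k with hSdef
  have hSpos : 0 < S :=
    Summable.tsum_pos hgs (fun k => (mul_pos (hqpos k) (hgpos k)).le) 0 (mul_pos (hqpos 0) (hgpos 0))
  have hSf : (∑' k : ℕ, f (k + 1) * p (k + 1)) = lam * S := by
    rw [hSdef, hqgfun, tsum_div_const]
    field_simp
  have hlogSf : Real.log (∑' k : ℕ, f (k + 1) * p (k + 1)) = Real.log lam + Real.log S := by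
    rw [hSf, Real.log_mul hlamne hSpos.ne']
  obtain ⟨hle, hiff⟩ := jensen_log_aux (fun k : ℕ => P (k + 1)) g hqpos hgpos hqs hq1 hgs hls
  constructor
  · rw [hlogSf, ← hlam, hT] at *
    linarith
  · rw [hlogSf, ← hlam]
    rw [show (∑' k : ℕ, Real.log (f (k + 1)) * P (k + 1)) - (Real.log lam + Real.log S)
          = (∑' k : ℕ, Real.log (f₀ (k + 1)) * P (k + 1)) - Real.log lam
        ↔ (∑' k : ℕ, Real.log (g k) * P (k + 1)) = Real.log S from by
      rw [hT]; constructor <;> intro h <;> linarith]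
    rw [hiff]
    constructor
    · intro hc
      refine ⟨S, hSpos, ?_⟩
      intro k hk
      obtain ⟨m, rfl⟩ : ∃ m, k = m + 1 := ⟨k - 1, by omega⟩
      have h0 : f₀ (m + 1) ≠ 0 := (hf₀ _ (h1 m)).ne'
      have hcm : f (m + 1) / f₀ (m + 1) = S := (hc m).trans hSdef.symm
      exact (div_eq_iff h0).mp hcm
    · rintro ⟨c, hc, hfc⟩ k
      have hgc : ∀ j, g j = c := by
        intro j
        have h0 : f₀ (j + 1) ≠ 0 := (hf₀ _ (h1 j)).ne'
        show f (j + 1) / f₀ (j + 1) = c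
        rw [hfc (j + 1) (h1 j), mul_div_assoc, div_self h0, mul_one]
      have hScalc : (∑' j : ℕ, P (j + 1) * g j) = c := by
        have : (fun j : ℕ => P (j + 1) * g j) = fun j => P (j + 1) * c := by
          funext j; rw [hgc j]
        rw [this, tsum_mul_right, hq1, one_mul]
      rw [hScalc, hgc]
end

section
/- Let V₀ be a symmetric positive definite d×d real matrix, a ∈ ℝ^d with a ≠ 0, and z ∈ ℝ^d. Then the function h ↦ 2 hᵀz − hᵀV₀h attains a unique maximum over the half-space {h ∈ ℝ^d : aᵀh ≤ 0}; the maximizer is ĥ = V₀^{−1/2} Π_G(V₀^{−1/2} z), where Π_G is the orthogonal (metric) projection onto the half-space G = {g : (V₀^{−1/2}a)ᵀ g ≤ 0}, and it satisfies aᵀĥ = min(0, aᵀV₀^{−1}z). -/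
open Matrix

/-- The square root of a positive semidefinite matrix, as `Matrix.PosSemidef.sqrt` was defined
in older Mathlib (removed since). -/
noncomputable def Matrix.PosSemidef.sqrt {n : Type*} [Fintype n] [DecidableEq n]
    {A : Matrix n n ℝ} (hA : PosSemidef A) : Matrix n n ℝ :=
  hA.1.eigenvectorUnitary.1 * diagonal ((√·) ∘ hA.1.eigenvalues) *
  (star hA.1.eigenvectorUnitary : Matrix n n ℝ)

/-- Orthogonal (metric) projection onto the closed half-space `{g : b ⬝ᵥ g ≤ 0}`:
it maps `w` to `w` if `b ⬝ᵥ w ≤ 0` and to `w − (b ⬝ᵥ w / |b|²) b` otherwise. -/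
noncomputable def projHalfSpace {d : ℕ} (b w : Fin d → ℝ) : Fin d → ℝ :=
  if b ⬝ᵥ w ≤ 0 then w else w - ((b ⬝ᵥ w) / (b ⬝ᵥ b)) • b

private lemma dot_self_nonneg {d : ℕ} (v : Fin d → ℝ) : 0 ≤ v ⬝ᵥ v :=
  Finset.sum_nonneg fun i _ => mul_self_nonneg _

private lemma dot_expand {d : ℕ} (x y : Fin d → ℝ) :
    (x - y) ⬝ᵥ (x - y) = x ⬝ᵥ x - 2 * (x ⬝ᵥ y) + y ⬝ᵥ y := by
  simp [sub_dotProduct, dotProduct_sub, dotProduct_comm y x]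
  ring

/-- Key properties of the half-space projection. -/
private lemma proj_key {d : ℕ} (b w : Fin d → ℝ) :
    b ⬝ᵥ projHalfSpace b w = min 0 (b ⬝ᵥ w) ∧
    ∀ g : Fin d → ℝ, b ⬝ᵥ g ≤ 0 →
      (projHalfSpace b w - w) ⬝ᵥ (projHalfSpace b w - w) ≤ (g - w) ⬝ᵥ (g - w) ∧
      ((g - w) ⬝ᵥ (g - w) = (projHalfSpace b w - w) ⬝ᵥ (projHalfSpace b w - w) →
        g = projHalfSpace b w) := by
  unfold projHalfSpace
  by_cases hle : b ⬝ᵥ w ≤ 0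
  · simp only [if_pos hle]
    refine ⟨by rw [min_eq_right hle], fun g hg => ?_⟩
    constructor
    · simpa using dot_self_nonneg (g - w)
    · intro hEq
      have : (g - w) ⬝ᵥ (g - w) = 0 := by simpa using hEq
      have := dotProduct_self_eq_zero.mp this
      exact sub_eq_zero.mp this
  · simp only [if_neg hle]
    push_neg at hle
    have hb : b ≠ 0 := by
      intro h; rw [h] at hle; simp at hle
    have hn : 0 < b ⬝ᵥ b := lt_of_le_of_ne (dot_self_nonneg b) (fun h => hb (dotProduct_self_eq_zero.mp h.symm))
    set m := b ⬝ᵥ w with hm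
    set n := b ⬝ᵥ b with hnn
    set t := m / n with ht
    have htpos : 0 < t := div_pos hle hn
    have htn : t * n = m := div_mul_cancel₀ m hn.ne'
    set P : Fin d → ℝ := w - t • b with hP
    -- scalar evaluations
    have e1 : w ⬝ᵥ (t • b) = t * m := by
      rw [dotProduct_smul, smul_eq_mul, dotProduct_comm w b, ← hm]
    have e2 : (t • b) ⬝ᵥ (t • b) = t ^ 2 * n := by
      rw [smul_dotProduct, dotProduct_smul, smul_eq_mul, smul_eq_mul, ← hnn]; ring
    have ePP : P ⬝ᵥ P = w ⬝ᵥ w - 2 * t * m + t ^ 2 * n := by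
      rw [hP, dot_expand, e1, e2]; ring
    have ePw : P ⬝ᵥ w = w ⬝ᵥ w - t * m := by
      rw [hP, sub_dotProduct, smul_dotProduct, smul_eq_mul, dotProduct_comm b w,
        dotProduct_comm w b, ← hm]
    have ebP : b ⬝ᵥ P = 0 := by
      rw [hP, dotProduct_sub, dotProduct_smul, smul_eq_mul, ← hm, ← hnn]
      linarith [htn]
    have ePmw : (P - w) ⬝ᵥ (P - w) = t ^ 2 * n := by
      rw [dot_expand, ePP, ePw]; ring
    refine ⟨by rw [ebP, min_eq_left hle.le], fun g hg => ?_⟩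
    have egP : g ⬝ᵥ P = g ⬝ᵥ w - t * (b ⬝ᵥ g) := by
      rw [hP, dotProduct_sub, dotProduct_smul, smul_eq_mul, dotProduct_comm g b]
    have hgP : (g - P) ⬝ᵥ (g - P) =
        g ⬝ᵥ g - 2 * (g ⬝ᵥ w) + 2 * t * (b ⬝ᵥ g) + w ⬝ᵥ w - 2 * t * m + t ^ 2 * n := by
      rw [dot_expand, egP, ePP]; ring
    have hgw : (g - w) ⬝ᵥ (g - w) = g ⬝ᵥ g - 2 * (g ⬝ᵥ w) + w ⬝ᵥ w := dot_expand g w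
    have hnonneg : 0 ≤ (g - P) ⬝ᵥ (g - P) := dot_self_nonneg _
    constructor
    · rw [ePmw, hgw]
      nlinarith [mul_nonneg htpos.le (neg_nonneg.mpr hg)]
    · intro hEq
      rw [hgw, ePmw] at hEq
      have hzero : (g - P) ⬝ᵥ (g - P) = 0 := by
        nlinarith [mul_nonneg htpos.le (neg_nonneg.mpr hg)]
      exact sub_eq_zero.mp (dotProduct_self_eq_zero.mp hzero)

/-- For `V₀` symmetric positive definite, `a ≠ 0` and any `z`, the map
`h ↦ 2 hᵀz − hᵀV₀h` attains a unique maximum over `{h : aᵀh ≤ 0}`, at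
`ĥ = V₀^{−1/2} Π_G (V₀^{−1/2} z)` where `Π_G` is the projection onto the half-space
`G = {g : (V₀^{−1/2}a)ᵀ g ≤ 0}`, and `aᵀĥ = min(0, aᵀ V₀⁻¹ z)`. -/
theorem stmt_15 {d : ℕ} (V₀ : Matrix (Fin d) (Fin d) ℝ) (hV₀ : V₀.PosDef)
    (a z : Fin d → ℝ) (ha : a ≠ 0) :
    ∀ hhat : Fin d → ℝ,
      hhat = (PosSemidef.sqrt hV₀.posSemidef)⁻¹
          *ᵥ projHalfSpace ((PosSemidef.sqrt hV₀.posSemidef)⁻¹ *ᵥ a) ((PosSemidef.sqrt hV₀.posSemidef)⁻¹ *ᵥ z) →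
      (a ⬝ᵥ hhat ≤ 0) ∧
      (∀ h : Fin d → ℝ, a ⬝ᵥ h ≤ 0 →
        2 * (h ⬝ᵥ z) - h ⬝ᵥ (V₀ *ᵥ h) ≤ 2 * (hhat ⬝ᵥ z) - hhat ⬝ᵥ (V₀ *ᵥ hhat)) ∧
      (∀ h : Fin d → ℝ, a ⬝ᵥ h ≤ 0 →
        2 * (h ⬝ᵥ z) - h ⬝ᵥ (V₀ *ᵥ h) = 2 * (hhat ⬝ᵥ z) - hhat ⬝ᵥ (V₀ *ᵥ hhat) →
        h = hhat) ∧
      a ⬝ᵥ hhat = min 0 (a ⬝ᵥ (V₀⁻¹ *ᵥ z)) := by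
  intro hhat hhat_def
  set S : Matrix (Fin d) (Fin d) ℝ := PosSemidef.sqrt hV₀.posSemidef with hSdef
  have hSsymm : Sᵀ = S := by
    rw [hSdef, Matrix.PosSemidef.sqrt, transpose_mul, transpose_mul, diagonal_transpose,
      star_eq_conjTranspose, conjTranspose_eq_transpose_of_trivial,
      transpose_transpose, Matrix.mul_assoc]
  have hSS : S * S = V₀ := by
    have hsp := hV₀.posSemidef.1.spectral_theorem
    rw [Unitary.conjStarAlgAut_apply] at hsp
    set U := hV₀.posSemidef.1.eigenvectorUnitary
    have hU : (star U : Matrix (Fin d) (Fin d) ℝ) * U.1 = 1 := Unitary.coe_star_mul_self U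
    have hD : diagonal ((√·) ∘ hV₀.posSemidef.1.eigenvalues) * diagonal ((√·) ∘ hV₀.posSemidef.1.eigenvalues)
        = diagonal (RCLike.ofReal ∘ hV₀.posSemidef.1.eigenvalues) := by
      rw [diagonal_mul_diagonal]
      congr 1; funext i
      simp [Real.mul_self_sqrt (hV₀.posSemidef.eigenvalues_nonneg i)]
    rw [hSdef, Matrix.PosSemidef.sqrt]
    conv_rhs => rw [hsp]
    calc _ = U.1 * (diagonal ((√·) ∘ hV₀.posSemidef.1.eigenvalues) * ((star U : Matrix (Fin d) (Fin d) ℝ) * U.1) * diagonal ((√·) ∘ hV₀.posSemidef.1.eigenvalues)) * (star U : Matrix (Fin d) (Fin d) ℝ) := by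
          simp only [Matrix.mul_assoc]; rfl
      _ = _ := by rw [hU, Matrix.mul_one, hD]
  have hdet : IsUnit S.det := by
    have hd : S.det * S.det = V₀.det := by rw [← det_mul, hSS]
    have : V₀.det ≠ 0 := hV₀.det_pos.ne'
    have : S.det ≠ 0 := fun h => this (by rw [← hd, h, zero_mul])
    exact this.isUnit
  set T : Matrix (Fin d) (Fin d) ℝ := S⁻¹ with hTdef
  have hTS : T * S = 1 := nonsing_inv_mul S hdet
  have hST : S * T = 1 := mul_nonsing_inv S hdet
  have hTsymm : Tᵀ = T := by rw [hTdef, transpose_nonsing_inv, hSsymm]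
  have hdotT : ∀ u v : Fin d → ℝ, u ⬝ᵥ (T *ᵥ v) = (T *ᵥ u) ⬝ᵥ v := by
    intro u v
    rw [dotProduct_mulVec, ← mulVec_transpose, hTsymm]
  have hdotS : ∀ u v : Fin d → ℝ, u ⬝ᵥ (S *ᵥ v) = (S *ᵥ u) ⬝ᵥ v := by
    intro u v
    rw [dotProduct_mulVec, ← mulVec_transpose, hSsymm]
  set b : Fin d → ℝ := T *ᵥ a with hb
  set w : Fin d → ℝ := T *ᵥ z with hw
  set p : Fin d → ℝ := projHalfSpace b w with hp
  have hhat_eq : hhat = T *ᵥ p := hhat_def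
  have hShhat : S *ᵥ hhat = p := by
    rw [hhat_eq, mulVec_mulVec, hST, one_mulVec]
  obtain ⟨hproj1, hproj2⟩ := proj_key b w
  -- change of variables facts for any h
  have key : ∀ h : Fin d → ℝ,
      h ⬝ᵥ z = (S *ᵥ h) ⬝ᵥ w ∧ h ⬝ᵥ (V₀ *ᵥ h) = (S *ᵥ h) ⬝ᵥ (S *ᵥ h) ∧
      a ⬝ᵥ h = b ⬝ᵥ (S *ᵥ h) := by
    intro h
    have hrec : T *ᵥ (S *ᵥ h) = h := by rw [mulVec_mulVec, hTS, one_mulVec]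
    refine ⟨?_, ?_, ?_⟩
    · calc h ⬝ᵥ z = (T *ᵥ (S *ᵥ h)) ⬝ᵥ z := by rw [hrec]
        _ = (S *ᵥ h) ⬝ᵥ (T *ᵥ z) := (hdotT (S *ᵥ h) z).symm
    · rw [← hSS, ← mulVec_mulVec, hdotS]
    · calc a ⬝ᵥ h = a ⬝ᵥ (T *ᵥ (S *ᵥ h)) := by rw [hrec]
        _ = (T *ᵥ a) ⬝ᵥ (S *ᵥ h) := hdotT a (S *ᵥ h)
  -- objective in terms of g := S *ᵥ h
  have obj : ∀ h : Fin d → ℝ,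
      2 * (h ⬝ᵥ z) - h ⬝ᵥ (V₀ *ᵥ h) =
        w ⬝ᵥ w - ((S *ᵥ h) - w) ⬝ᵥ ((S *ᵥ h) - w) := by
    intro h
    obtain ⟨e1, e2, _⟩ := key h
    rw [e1, e2, dot_expand]
    ring
  have ahhat : a ⬝ᵥ hhat = b ⬝ᵥ p := by
    obtain ⟨_, _, e3⟩ := key hhat
    rw [e3, hShhat]
  have hbw : b ⬝ᵥ w = a ⬝ᵥ (V₀⁻¹ *ᵥ z) := by
    have hVinv : V₀⁻¹ = T * T := by rw [← hSS, Matrix.mul_inv_rev]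
    rw [hVinv, ← mulVec_mulVec]
    exact (hdotT a (T *ᵥ z)).symm
  refine ⟨?_, ?_, ?_, ?_⟩
  · rw [ahhat, hproj1]
    exact min_le_left _ _
  · intro h hah
    obtain ⟨_, _, e3⟩ := key h
    rw [obj h, obj hhat, hShhat]
    have := (hproj2 (S *ᵥ h) (by rw [← e3]; exact hah)).1
    linarith
  · intro h hah hEq
    obtain ⟨_, _, e3⟩ := key h
    rw [obj h, obj hhat, hShhat] at hEq
    have hgeq : (S *ᵥ h - w) ⬝ᵥ (S *ᵥ h - w) = (p - w) ⬝ᵥ (p - w) := by linarith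
    have := (hproj2 (S *ᵥ h) (by rw [← e3]; exact hah)).2 hgeq
    have : T *ᵥ (S *ᵥ h) = T *ᵥ p := by rw [this]
    rwa [mulVec_mulVec, hTS, one_mulVec, ← hhat_eq] at this
  · rw [ahhat, hproj1, hbw]
end

section
/- Let V be a positive semidefinite symmetric d×d real matrix, V₀ a symmetric positive definite d×d real matrix, and a ∈ ℝ^d with a ≠ 0. Let Z be a random vector in ℝ^d with the centered multivariate Gaussian distribution N(0, V), and let ĥ be the (unique) maximizer of h ↦ 2hᵀZ − hᵀV₀h over {h : aᵀh ≤ 0}. Then aᵀĥ = min(0, aᵀV₀^{−1}Z), and its law equals the law of W·1{W ≤ 0} where W is a real Gaussian random variable with mean 0 and variance aᵀV₀^{−1}VV₀^{−1}a; equivalently, the pushforward of N(0, V) under the map z ↦ min(0, aᵀV₀^{−1}z) equals the pushforward of the real Gaussian measure N(0, aᵀV₀^{−1}VV₀^{−1}a) under w ↦ min(0, w). -/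
open Matrix MeasureTheory ProbabilityTheory

private lemma symdot {d : ℕ} {A : Matrix (Fin d) (Fin d) ℝ} (hA : Aᵀ = A) (x y : Fin d → ℝ) :
    x ⬝ᵥ (A *ᵥ y) = y ⬝ᵥ (A *ᵥ x) := by
  rw [Matrix.dotProduct_mulVec, ← Matrix.mulVec_transpose, hA, dotProduct_comm]

private lemma key_quad {d : ℕ} {V₀ : Matrix (Fin d) (Fin d) ℝ} (hsym : V₀ᵀ = V₀)
    (z h : Fin d → ℝ) (hz : V₀ *ᵥ (V₀⁻¹ *ᵥ z) = z) :
    2 * (h ⬝ᵥ z) - h ⬝ᵥ (V₀ *ᵥ h)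
      = (V₀⁻¹ *ᵥ z) ⬝ᵥ z - (h - V₀⁻¹ *ᵥ z) ⬝ᵥ (V₀ *ᵥ (h - V₀⁻¹ *ᵥ z)) := by
  set s := V₀⁻¹ *ᵥ z with hs
  have h1 : h ⬝ᵥ (V₀ *ᵥ s) = h ⬝ᵥ z := by rw [hz]
  have h2 : s ⬝ᵥ (V₀ *ᵥ h) = h ⬝ᵥ z := by rw [symdot hsym, hz]
  have h3 : s ⬝ᵥ (V₀ *ᵥ s) = s ⬝ᵥ z := by rw [hz]
  simp only [Matrix.mulVec_sub, dotProduct_sub, sub_dotProduct, h1, h2, h3]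
  ring

/-- Let `Z ~ N(0, V)` be a centered Gaussian vector (characterized by its
one-dimensional projections), `V₀` symmetric positive definite, `a ≠ 0`, and let `ĥ` be
the maximizer of `h ↦ 2hᵀZ − hᵀV₀h` over `{h : aᵀh ≤ 0}`. Then `aᵀĥ = min(0, aᵀV₀⁻¹Z)`,
and the law of `aᵀĥ` is that of `W·1{W ≤ 0}` with `W ~ N(0, aᵀV₀⁻¹VV₀⁻¹a)`: the
pushforward of the law of `Z` under `z ↦ min(0, aᵀV₀⁻¹z)` equals the pushforward of
`N(0, aᵀV₀⁻¹VV₀⁻¹a)` under `w ↦ min(0, w)`. -/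
theorem stmt_16 {d : ℕ} {Ω : Type*} [MeasurableSpace Ω] (P : Measure Ω)
    [IsProbabilityMeasure P]
    (V V₀ : Matrix (Fin d) (Fin d) ℝ) (hV : V.PosSemidef) (hV₀ : V₀.PosDef)
    (a : Fin d → ℝ) (ha : a ≠ 0)
    (Z : Ω → (Fin d → ℝ)) (hZmeas : Measurable Z)
    (hZgauss : ∀ u : Fin d → ℝ,
      Measure.map (fun ω => u ⬝ᵥ Z ω) P = gaussianReal 0 (Real.toNNReal (u ⬝ᵥ (V *ᵥ u)))) :
    (∀ ω : Ω, ∀ h : Fin d → ℝ,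
      a ⬝ᵥ h ≤ 0 →
      (∀ h' : Fin d → ℝ, a ⬝ᵥ h' ≤ 0 →
        2 * (h' ⬝ᵥ Z ω) - h' ⬝ᵥ (V₀ *ᵥ h') ≤ 2 * (h ⬝ᵥ Z ω) - h ⬝ᵥ (V₀ *ᵥ h)) →
      a ⬝ᵥ h = min 0 (a ⬝ᵥ (V₀⁻¹ *ᵥ Z ω))) ∧
    Measure.map (fun ω => min 0 (a ⬝ᵥ (V₀⁻¹ *ᵥ Z ω))) P
      = Measure.map (fun w : ℝ => min 0 w)
          (gaussianReal 0 (Real.toNNReal (a ⬝ᵥ ((V₀⁻¹ * V * V₀⁻¹) *ᵥ a)))) := by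
  have hsym : V₀ᵀ = V₀ := by simpa using hV₀.isHermitian.eq
  have hdet : IsUnit V₀.det := isUnit_iff_ne_zero.mpr hV₀.det_pos.ne'
  have hz : ∀ z : Fin d → ℝ, V₀ *ᵥ (V₀⁻¹ *ᵥ z) = z := fun z => by
    rw [Matrix.mulVec_mulVec, Matrix.mul_nonsing_inv _ hdet, Matrix.one_mulVec]
  have hpos : ∀ x : Fin d → ℝ, x ≠ 0 → 0 < x ⬝ᵥ (V₀ *ᵥ x) := fun x hx => by
    simpa using hV₀.dotProduct_mulVec_pos hx
  have hinvsym : (V₀⁻¹)ᵀ = V₀⁻¹ := by rw [Matrix.transpose_nonsing_inv, hsym]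
  constructor
  · intro ω h hfeas hmax
    set z := Z ω with hzdef
    set s := V₀⁻¹ *ᵥ z with hsdef
    set c := a ⬝ᵥ s with hcdef
    rcases le_or_gt c 0 with hc | hc
    · -- the unconstrained maximizer is feasible
      have hle := hmax s hc
      rw [key_quad hsym z h (hz z), key_quad hsym z s (hz z)] at hle
      have hq0 : (s - s) ⬝ᵥ (V₀ *ᵥ (s - s)) = 0 := by simp
      have hle2 : (h - s) ⬝ᵥ (V₀ *ᵥ (h - s)) ≤ 0 := by
        rw [hq0] at hle; linarith
      have heq : h = s := by
        by_contra hne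
        have := hpos (h - s) (sub_ne_zero.mpr hne)
        linarith
      rw [heq, min_eq_right hc]
    · -- constraint is active
      have hgoal : a ⬝ᵥ h = 0 := by
        by_contra hne
        have hlt : a ⬝ᵥ h < 0 := lt_of_le_of_ne hfeas hne
        set w := s - h with hwdef
        have haw : 0 < a ⬝ᵥ w := by
          have : a ⬝ᵥ w = c - a ⬝ᵥ h := by rw [hwdef, dotProduct_sub, hcdef]
          rw [this]; linarith
        have hwne : w ≠ 0 := by
          intro h0
          rw [h0] at haw; simp at haw
        have hqw : 0 < w ⬝ᵥ (V₀ *ᵥ w) := hpos w hwne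
        set t : ℝ := min 1 ((-(a ⬝ᵥ h)) / (a ⬝ᵥ w)) with htdef
        have ht0 : 0 < t := lt_min one_pos (div_pos (by linarith) haw)
        have ht1 : t ≤ 1 := min_le_left _ _
        have htfeas : a ⬝ᵥ (h + t • w) ≤ 0 := by
          rw [dotProduct_add, dotProduct_smul, smul_eq_mul]
          have : t ≤ (-(a ⬝ᵥ h)) / (a ⬝ᵥ w) := min_le_right _ _
          have := (le_div_iff₀ haw).mp this
          linarith
        have hle := hmax (h + t • w) htfeas
        rw [key_quad hsym z h (hz z), key_quad hsym z (h + t • w) (hz z)] at hle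
        have hdiff : h + t • w - s = -((1 - t) • w) := by
          rw [hwdef]
          ext i
          simp [Pi.smul_apply, smul_eq_mul]
          ring
        have hdiff2 : h - s = -(1 • w) := by
          rw [hwdef]; ext i; simp
        have hq1 : (h + t • w - s) ⬝ᵥ (V₀ *ᵥ (h + t • w - s)) = (1 - t)^2 * (w ⬝ᵥ (V₀ *ᵥ w)) := by
          rw [hdiff]
          simp only [Matrix.mulVec_neg, Matrix.mulVec_smul, dotProduct_neg, neg_dotProduct,
            dotProduct_smul, smul_dotProduct, smul_eq_mul, neg_neg]
          ring
        have hq2 : (h - s) ⬝ᵥ (V₀ *ᵥ (h - s)) = w ⬝ᵥ (V₀ *ᵥ w) := by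
          rw [hdiff2, one_smul]
          simp only [Matrix.mulVec_neg, dotProduct_neg, neg_dotProduct, neg_neg]
        rw [hq1, hq2] at hle
        have hprod : 0 < (w ⬝ᵥ (V₀ *ᵥ w)) * (t * (2 - t)) :=
          mul_pos hqw (mul_pos ht0 (by linarith))
        nlinarith [hprod]
      rw [hgoal, min_eq_left hc.le]
  · -- distributional part
    set u := V₀⁻¹ *ᵥ a with hudef
    have hrw : ∀ z : Fin d → ℝ, a ⬝ᵥ (V₀⁻¹ *ᵥ z) = u ⬝ᵥ z := fun z => by
      rw [symdot hinvsym a z, dotProduct_comm]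
    have hvar : u ⬝ᵥ (V *ᵥ u) = a ⬝ᵥ ((V₀⁻¹ * V * V₀⁻¹) *ᵥ a) := by
      rw [← Matrix.mulVec_mulVec, ← Matrix.mulVec_mulVec, symdot hinvsym a _, hudef,
        dotProduct_comm]
    have hF : Measurable fun ω => u ⬝ᵥ Z ω := by
      simp only [dotProduct]
      exact Finset.measurable_sum _ fun i _ =>
        measurable_const.mul ((measurable_pi_apply i).comp hZmeas)
    have hmin : Measurable fun w : ℝ => min 0 w := measurable_const.min measurable_id
    calc Measure.map (fun ω => min 0 (a ⬝ᵥ (V₀⁻¹ *ᵥ Z ω))) P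
        = Measure.map ((fun w : ℝ => min 0 w) ∘ (fun ω => u ⬝ᵥ Z ω)) P := by
          congr 1; ext ω; simp [Function.comp, hrw]
      _ = Measure.map (fun w : ℝ => min 0 w) (Measure.map (fun ω => u ⬝ᵥ Z ω) P) :=
          (Measure.map_map hmin hF).symm
      _ = Measure.map (fun w : ℝ => min 0 w)
            (gaussianReal 0 (Real.toNNReal (a ⬝ᵥ ((V₀⁻¹ * V * V₀⁻¹) *ᵥ a)))) := by
          rw [hZgauss u, hvar]
end

section
/- Let α > −1 and define p_k = (2 + α) Γ(k + α) Γ(3 + 2α) / (Γ(k + 3 + 2α) Γ(1 + α)) for k ∈ ℕ₊. Then for every k ∈ ℕ₊, the series Σ_{l>k} p_l (l + α) converges and Σ_{l>k} p_l (l + α) = ((k + α)(k + 1 + α)/(1 + α)) · p_k. -/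
open Filter Real Set

lemma gamma_ratio_tendsto {s : ℝ} (hs : 0 < s) :
    Tendsto (fun x : ℝ => Real.Gamma x / Real.Gamma (x + s)) atTop (nhds 0) := by
  rcases le_or_gt 1 s with h1 | h1
  · refine tendsto_of_tendsto_of_tendsto_of_le_of_le' tendsto_const_nhds
      tendsto_inv_atTop_zero ?_ ?_
    · filter_upwards [eventually_ge_atTop (2:ℝ)] with x hx
      have hx0 : (0:ℝ) < x := by linarith
      exact div_nonneg (Real.Gamma_pos_of_pos hx0).le
        (Real.Gamma_pos_of_pos (by linarith)).le
    · filter_upwards [eventually_ge_atTop (2:ℝ)] with x hx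
      have hx0 : (0:ℝ) < x := by linarith
      have hpos : 0 < Real.Gamma (x + s) := Real.Gamma_pos_of_pos (by linarith)
      have h2 : Real.Gamma (x + 1) ≤ Real.Gamma (x + s) := by
        rcases eq_or_lt_of_le h1 with h | h
        · rw [← h]
        · exact (Real.Gamma_strictMonoOn_Ici (by simp [mem_Ici]; linarith)
            (by simp [mem_Ici]; linarith) (by linarith)).le
      have h3 : Real.Gamma (x + 1) = x * Real.Gamma x := Real.Gamma_add_one hx0.ne'
      rw [div_le_iff₀ hpos]
      calc Real.Gamma x = x⁻¹ * (x * Real.Gamma x) := by field_simp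
        _ = x⁻¹ * Real.Gamma (x + 1) := by rw [h3]
        _ ≤ x⁻¹ * Real.Gamma (x + s) := by
            exact mul_le_mul_of_nonneg_left h2 (by positivity)
  · have hb : Tendsto (fun x : ℝ => (x + (-1 + s)) ^ (-s)) atTop (nhds 0) :=
      (tendsto_rpow_neg_atTop hs).comp (tendsto_atTop_add_const_right _ _ tendsto_id)
    refine tendsto_of_tendsto_of_tendsto_of_le_of_le' tendsto_const_nhds hb ?_ ?_
    · filter_upwards [eventually_ge_atTop (2:ℝ)] with x hx
      have hx0 : (0:ℝ) < x := by linarith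
      exact div_nonneg (Real.Gamma_pos_of_pos hx0).le
        (Real.Gamma_pos_of_pos (by linarith)).le
    · filter_upwards [eventually_ge_atTop (2:ℝ)] with x hx
      have hx0 : (0:ℝ) < x := by linarith
      have ha : (0:ℝ) < x + (-1 + s) := by linarith
      have hbpos : (0:ℝ) < x + s := by linarith
      have hΓa : 0 < Real.Gamma (x + (-1 + s)) := Real.Gamma_pos_of_pos ha
      have hΓb : 0 < Real.Gamma (x + s) := Real.Gamma_pos_of_pos hbpos
      have hΓx : 0 < Real.Gamma x := Real.Gamma_pos_of_pos hx0
      have hconv := Real.convexOn_log_Gamma.2 (mem_Ioi.2 ha) (mem_Ioi.2 hbpos)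
        hs.le (by linarith : (0:ℝ) ≤ 1 - s) (by ring : s + (1 - s) = 1)
      simp only [smul_eq_mul, Function.comp_apply] at hconv
      rw [show s * (x + (-1 + s)) + (1 - s) * (x + s) = x by ring] at hconv
      have hrec : Real.Gamma (x + s) = (x + (-1 + s)) * Real.Gamma (x + (-1 + s)) := by
        rw [show x + s = (x + (-1 + s)) + 1 by ring]
        exact Real.Gamma_add_one ha.ne'
      have hla : Real.log (Real.Gamma (x + (-1 + s)))
          = Real.log (Real.Gamma (x + s)) - Real.log (x + (-1 + s)) := by
        rw [hrec, Real.log_mul ha.ne' hΓa.ne']; ring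
      have hkey : Real.Gamma x ≤ Real.Gamma (x + s) * (x + (-1 + s)) ^ (-s) := by
        calc Real.Gamma x = Real.exp (Real.log (Real.Gamma x)) := (Real.exp_log hΓx).symm
          _ ≤ Real.exp (s * Real.log (Real.Gamma (x + (-1 + s)))
              + (1 - s) * Real.log (Real.Gamma (x + s))) := Real.exp_le_exp.2 hconv
          _ = Real.exp (Real.log (Real.Gamma (x + s)) + Real.log (x + (-1 + s)) * (-s)) := by
              rw [hla]; ring_nf
          _ = Real.Gamma (x + s) * (x + (-1 + s)) ^ (-s) := by
              rw [Real.exp_add, Real.exp_log hΓb, Real.rpow_def_of_pos ha]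
      rw [div_le_iff₀ hΓb]
      linarith [hkey]

/-- For the limiting degree distribution
`p_k = (2+α) Γ(k+α) Γ(3+2α) / (Γ(k+3+2α) Γ(1+α))` of the affine preferential attachment
model, for every `k ≥ 1` the series `Σ_{l>k} p_l (l+α)` converges and equals
`((k+α)(k+1+α)/(1+α)) p_k`. -/
theorem stmt_17 (α : ℝ) (hα : -1 < α) (p : ℕ → ℝ)
    (hp : ∀ k, 1 ≤ k →
      p k = (2 + α) * Real.Gamma ((k : ℝ) + α) * Real.Gamma (3 + 2 * α)
        / (Real.Gamma ((k : ℝ) + 3 + 2 * α) * Real.Gamma (1 + α))) :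
    ∀ k, 1 ≤ k →
      Summable (fun l : ℕ => p (k + 1 + l) * (((k + 1 + l : ℕ) : ℝ) + α)) ∧
      (∑' l : ℕ, p (k + 1 + l) * (((k + 1 + l : ℕ) : ℝ) + α))
        = (((k : ℝ) + α) * ((k : ℝ) + 1 + α) / (1 + α)) * p k := by
  intro k hk
  have hα1 : (0:ℝ) < 1 + α := by linarith
  set C : ℝ := (2 + α) * Real.Gamma (3 + 2 * α) / Real.Gamma (1 + α) with hC
  have hCpos : 0 < C :=
    div_pos (mul_pos (by linarith) (Real.Gamma_pos_of_pos (by linarith)))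
      (Real.Gamma_pos_of_pos hα1)
  clear_value C
  have hp' : ∀ n : ℕ, 1 ≤ n →
      p n = C * (Real.Gamma ((n:ℝ) + α) / Real.Gamma ((n:ℝ) + 3 + 2*α)) := by
    intro n hn
    have hn1 : (1:ℝ) ≤ (n:ℝ) := by exact_mod_cast hn
    have h4 : Real.Gamma (1+α) ≠ 0 := (Real.Gamma_pos_of_pos hα1).ne'
    have h3 : Real.Gamma ((n:ℝ)+3+2*α) ≠ 0 :=
      (Real.Gamma_pos_of_pos (by linarith)).ne'
    rw [hp n hn, hC]
    field_simp
  set T : ℕ → ℝ := fun n =>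
    C / (1 + α) * (Real.Gamma ((n:ℝ) + 2 + α) / Real.Gamma ((n:ℝ) + 3 + 2*α)) with hT
  clear_value T
  have hT0 : Tendsto T atTop (nhds 0) := by
    have hx : Tendsto (fun n : ℕ => (n:ℝ) + 2 + α) atTop atTop := by
      simpa [add_assoc] using
        tendsto_atTop_add_const_right atTop (2+α) tendsto_natCast_atTop_atTop
    have h2 := ((gamma_ratio_tendsto hα1).comp hx).const_mul (C/(1+α))
    rw [mul_zero] at h2
    refine h2.congr fun n => ?_
    rw [hT]
    simp only [Function.comp_apply]
    congr 2
    ring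
  have hTpos : ∀ n : ℕ, 0 < T n := by
    intro n
    rw [hT]
    have : (0:ℝ) ≤ (n:ℝ) := Nat.cast_nonneg n
    exact mul_pos (div_pos hCpos hα1)
      (div_pos (Real.Gamma_pos_of_pos (by linarith)) (Real.Gamma_pos_of_pos (by linarith)))
  have hstep : ∀ l : ℕ, p (k+1+l) * (((k+1+l : ℕ):ℝ) + α) = T (k+l) - T (k+l+1) := by
    intro l
    have hidx : k + 1 + l = (k+l) + 1 := by omega
    have hy1 : (1:ℝ) ≤ (k:ℝ) + (l:ℝ) := by
      have : (1:ℝ) ≤ (k:ℝ) := by exact_mod_cast hk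
      have : (0:ℝ) ≤ (l:ℝ) := Nat.cast_nonneg l
      linarith
    rw [hidx, hp' ((k+l)+1) (by omega), hT]
    push_cast
    have hA : (0:ℝ) < Real.Gamma ((k:ℝ)+(l:ℝ)+1+α) := Real.Gamma_pos_of_pos (by linarith)
    have hB : (0:ℝ) < Real.Gamma ((k:ℝ)+(l:ℝ)+3+2*α) := Real.Gamma_pos_of_pos (by linarith)
    have g1 : Real.Gamma ((k:ℝ)+(l:ℝ)+1+3+2*α)
        = ((k:ℝ)+(l:ℝ)+3+2*α) * Real.Gamma ((k:ℝ)+(l:ℝ)+3+2*α) := by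
      rw [show (k:ℝ)+(l:ℝ)+1+3+2*α = ((k:ℝ)+(l:ℝ)+3+2*α)+1 by ring]
      exact Real.Gamma_add_one (by linarith)
    have g2 : Real.Gamma ((k:ℝ)+(l:ℝ)+2+α)
        = ((k:ℝ)+(l:ℝ)+1+α) * Real.Gamma ((k:ℝ)+(l:ℝ)+1+α) := by
      rw [show (k:ℝ)+(l:ℝ)+2+α = ((k:ℝ)+(l:ℝ)+1+α)+1 by ring]
      exact Real.Gamma_add_one (by linarith)
    have g3 : Real.Gamma ((k:ℝ)+(l:ℝ)+1+2+α)
        = ((k:ℝ)+(l:ℝ)+2+α) * Real.Gamma ((k:ℝ)+(l:ℝ)+2+α) := by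
      rw [show (k:ℝ)+(l:ℝ)+1+2+α = ((k:ℝ)+(l:ℝ)+2+α)+1 by ring]
      exact Real.Gamma_add_one (by linarith)
    rw [g1, g3, g2]
    have hQ : ((k:ℝ)+(l:ℝ)+3+2*α) ≠ 0 := by linarith
    set A := Real.Gamma ((k:ℝ)+(l:ℝ)+1+α) with hAd
    set B := Real.Gamma ((k:ℝ)+(l:ℝ)+3+2*α) with hBd
    clear_value A B
    field_simp [hα1.ne', hB.ne', hQ]
    ring
  have hTk : T k = (((k:ℝ) + α) * ((k:ℝ) + 1 + α) / (1 + α)) * p k := by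
    have hk1 : (1:ℝ) ≤ (k:ℝ) := by exact_mod_cast hk
    simp only [hT]
    rw [hp' k hk]
    have hA : (0:ℝ) < Real.Gamma ((k:ℝ)+α) := Real.Gamma_pos_of_pos (by linarith)
    have hB : (0:ℝ) < Real.Gamma ((k:ℝ)+3+2*α) := Real.Gamma_pos_of_pos (by linarith)
    have g1 : Real.Gamma ((k:ℝ)+2+α) = ((k:ℝ)+1+α) * Real.Gamma ((k:ℝ)+1+α) := by
      rw [show (k:ℝ)+2+α = ((k:ℝ)+1+α)+1 by ring]
      exact Real.Gamma_add_one (by linarith)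
    have g2 : Real.Gamma ((k:ℝ)+1+α) = ((k:ℝ)+α) * Real.Gamma ((k:ℝ)+α) := by
      rw [show (k:ℝ)+1+α = ((k:ℝ)+α)+1 by ring]
      exact Real.Gamma_add_one (by linarith)
    rw [g1, g2]
    set A := Real.Gamma ((k:ℝ)+α) with hAd
    set B := Real.Gamma ((k:ℝ)+3+2*α) with hBd
    clear_value A B
    field_simp [hα1.ne', hB.ne']
  have hpos : ∀ l : ℕ, 0 ≤ p (k+1+l) * (((k+1+l : ℕ):ℝ) + α) := by
    intro l
    have h2 : (2:ℝ) ≤ ((k+1+l : ℕ):ℝ) := by exact_mod_cast by omega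
    have hn1 : (1:ℝ) ≤ ((k+1+l : ℕ):ℝ) := by linarith
    apply mul_nonneg _ (by linarith)
    rw [hp' (k+1+l) (by omega)]
    exact mul_nonneg hCpos.le (div_nonneg (Real.Gamma_pos_of_pos (by linarith)).le
      (Real.Gamma_pos_of_pos (by linarith)).le)
  have hsum : HasSum (fun l : ℕ => p (k+1+l) * (((k+1+l : ℕ):ℝ) + α)) (T k) := by
    rw [hasSum_iff_tendsto_nat_of_nonneg hpos]
    have hps : ∀ n : ℕ, ∑ l ∈ Finset.range n, p (k+1+l) * (((k+1+l : ℕ):ℝ) + α)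
        = T k - T (k+n) := by
      intro n
      calc ∑ l ∈ Finset.range n, p (k+1+l) * (((k+1+l : ℕ):ℝ) + α)
          = ∑ l ∈ Finset.range n, (T (k+l) - T (k+(l+1))) := by
            refine Finset.sum_congr rfl fun l _ => ?_
            rw [hstep l, Nat.add_assoc]
        _ = T (k+0) - T (k+n) := Finset.sum_range_sub' (fun l => T (k+l)) n
        _ = T k - T (k+n) := by rw [Nat.add_zero]
    simp only [hps]
    have h1 : Tendsto (fun n : ℕ => T (k+n)) atTop (nhds 0) := by
      have := hT0.comp (tendsto_add_atTop_nat k)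
      refine this.congr fun n => ?_
      simp [Function.comp, Nat.add_comm]
    simpa using tendsto_const_nhds.sub h1
  exact ⟨hsum.summable, by rw [hsum.tsum_eq, hTk]⟩
end

section
/- Let α > −1 and κ ≥ 2 be an integer. Define the (κ+1)×(κ+1) real matrix A_κ by: A_{1,1} = 0, A_{1,j} = j + α for 2 ≤ j ≤ κ, A_{1,κ+1} = 1; A_{j+1,j} = j + α for 1 ≤ j ≤ κ − 1; A_{j,j} = −(j + α) for 2 ≤ j ≤ κ; A_{κ+1,κ} = (κ + α)(κ + 1 + α); A_{κ+1,κ+1} = 1; and all other entries 0. Then the characteristic polynomial of A_κ satisfies det(λI − A_κ) = (λ − (2 + α)) · ∏_{l=1}^{κ} (λ + l + α) for all λ ∈ ℝ. In particular, 2 + α is the unique positive eigenvalue of A_κ and all other eigenvalues are the real numbers −(l + α), l = 1, …, κ. -/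
set_option maxHeartbeats 1000000


/-- The `(κ+1) × (κ+1)` transfer matrix `A_κ` of the generalized Pólya urn
representation of the affine preferential attachment tree with attachment function
`f(k) = k + α` (rows/columns indexed by `1, …, κ+1`, realized by `Fin (κ+1)` via
`i ↦ i + 1`). -/
def PATransferMatrix (α : ℝ) (κ : ℕ) : Matrix (Fin (κ + 1)) (Fin (κ + 1)) ℝ :=
  Matrix.of fun i j =>
    let I := (i : ℕ) + 1
    let J := (j : ℕ) + 1
    if I = 1 then
      (if J = 1 then 0 else if J = κ + 1 then 1 else (J : ℝ) + α)
    else if I = κ + 1 then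
      (if J = κ then ((κ : ℝ) + α) * ((κ : ℝ) + 1 + α) else if J = κ + 1 then 1 else 0)
    else if I = J then -((I : ℝ) + α)
    else if I = J + 1 then (J : ℝ) + α
    else 0

namespace PAaux18

open Finset

noncomputable def bEnt (lam α x : ℝ) (n : ℕ) (i j : ℕ) : ℝ :=
  if i = 0 then
    (if j = 0 then x else if j = n then -1 else -((j : ℝ) + 1 + α))
  else if i = n then
    (if j + 1 = n then -((n : ℝ) + α) * ((n : ℝ) + 1 + α) else if j = n then lam - 1 else 0)
  else if i = j then lam + (i : ℝ) + 1 + α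
  else if i = j + 1 then -((j : ℝ) + 1 + α)
  else 0

noncomputable def Bmat (lam α x : ℝ) (n : ℕ) : Matrix (Fin (n+1)) (Fin (n+1)) ℝ :=
  Matrix.of fun i j => bEnt lam α x n i j

lemma succAbove_one_val (n : ℕ) (p : Fin (n+1)) :
    (((1 : Fin (n+2)).succAbove p) : ℕ) = if (p:ℕ) = 0 then 0 else (p:ℕ)+1 := by
  simp [Fin.succAbove, Fin.lt_def]
  split_ifs <;> simp_all

lemma minor_eq (lam α x : ℝ) (n : ℕ) (hn : 1 ≤ n) :
    (Bmat lam α x (n+1)).submatrix (1 : Fin (n+2)).succAbove Fin.succ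
      = Bmat lam (α+1) (-(2+α)) n := by
  ext p q
  have hle : (p : ℕ) ≤ n := Nat.lt_succ_iff.mp p.isLt
  have hq : (q : ℕ) ≤ n := Nat.lt_succ_iff.mp q.isLt
  have hs := succAbove_one_val n p
  simp only [Matrix.submatrix_apply, Bmat, Matrix.of_apply, Fin.val_succ]
  rw [hs]
  rcases Nat.eq_zero_or_pos (p:ℕ) with hp | hp
  · rw [if_pos hp, hp]
    simp only [bEnt]
    split_ifs <;> first | rfl | exact ‹False›.elim | (exfalso; omega) | (push_cast; ring1) | (rw [show (q:ℕ) = 0 from by omega]; push_cast; ring1) | (rw [show (q:ℕ) = n from by omega]; push_cast; ring1) | (rw [show (p:ℕ) = (q:ℕ)+1 from by omega]; push_cast; ring1)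
  · rw [if_neg (by omega)]
    simp only [bEnt]
    split_ifs <;> first | rfl | exact ‹False›.elim | (exfalso; omega) | (push_cast; ring1) | (rw [show (q:ℕ) = 0 from by omega]; push_cast; ring1) | (rw [show (q:ℕ) = n from by omega]; push_cast; ring1) | (rw [show (p:ℕ) = (q:ℕ)+1 from by omega]; push_cast; ring1)

lemma minor0_det (lam α x : ℝ) (n : ℕ) :
    ((Bmat lam α x (n+1)).submatrix (Fin.succ : Fin (n+1) → Fin (n+2)) Fin.succ).det
      = (∏ l ∈ range n, (lam + (l:ℝ) + 2 + α)) * (lam - 1) := by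
  rw [Matrix.det_of_lowerTriangular]
  · rw [Fin.prod_univ_castSucc]
    have h1 : ∀ i : Fin n,
        (Bmat lam α x (n+1)).submatrix (Fin.succ : Fin (n+1) → Fin (n+2)) Fin.succ
          i.castSucc i.castSucc = lam + (i:ℝ) + 2 + α := by
      intro i
      have hi : (i : ℕ) < n := i.isLt
      simp only [Matrix.submatrix_apply, Bmat, Matrix.of_apply, bEnt, Fin.val_succ,
        Fin.coe_castSucc]
      split_ifs <;> first | rfl | exact ‹False›.elim | (exfalso; omega) | (push_cast; ring1) | (rw [show (q:ℕ) = 0 from by omega]; push_cast; ring1) | (rw [show (q:ℕ) = n from by omega]; push_cast; ring1) | (rw [show (p:ℕ) = (q:ℕ)+1 from by omega]; push_cast; ring1)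
    have h2 : (Bmat lam α x (n+1)).submatrix (Fin.succ : Fin (n+1) → Fin (n+2)) Fin.succ
          (Fin.last n) (Fin.last n) = lam - 1 := by
      simp only [Matrix.submatrix_apply, Bmat, Matrix.of_apply, bEnt, Fin.val_succ,
        Fin.val_last]
      split_ifs <;> first | rfl | exact ‹False›.elim | (exfalso; omega) | (push_cast; ring1) | (rw [show (q:ℕ) = 0 from by omega]; push_cast; ring1) | (rw [show (q:ℕ) = n from by omega]; push_cast; ring1) | (rw [show (p:ℕ) = (q:ℕ)+1 from by omega]; push_cast; ring1)
    rw [h2]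
    congr 1
    rw [← Fin.prod_univ_eq_prod_range (fun l => lam + (l:ℝ) + 2 + α) n]
    exact Finset.prod_congr rfl fun i _ => h1 i
  · intro p q hpq
    have hpq' : p < q := hpq
    have hpq2 : (p : ℕ) < (q : ℕ) := hpq'
    have hq : (q : ℕ) ≤ n := Nat.lt_succ_iff.mp q.isLt
    simp only [Matrix.submatrix_apply, Bmat, Matrix.of_apply, bEnt, Fin.val_succ]
    split_ifs <;> first | rfl | exact ‹False›.elim | (exfalso; omega)

lemma col0 (lam α x : ℝ) (n : ℕ) (hn : 1 ≤ n) (i : Fin n) :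
    Bmat lam α x (n+1) i.succ.succ 0 = 0 := by
  simp only [Bmat, Matrix.of_apply, bEnt, Fin.val_succ, Fin.val_zero]
  have hi : (i:ℕ) < n := i.isLt
  split_ifs <;> first | rfl | exact ‹False›.elim | (exfalso; omega)

lemma det_expand (lam α x : ℝ) (n : ℕ) (hn : 1 ≤ n) :
    (Bmat lam α x (n+1)).det
      = x * ((∏ l ∈ range n, (lam + (l:ℝ) + 2 + α)) * (lam - 1))
        + (1+α) * (Bmat lam (α+1) (-(2+α)) n).det := by
  rw [Matrix.det_succ_column_zero]
  rw [Fin.sum_univ_succ, Fin.sum_univ_succ]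
  have hrest : ∀ i : Fin n, (-1 : ℝ) ^ (((i.succ.succ : Fin (n+2))) : ℕ) *
      Bmat lam α x (n+1) i.succ.succ 0 *
      ((Bmat lam α x (n+1)).submatrix (i.succ.succ).succAbove Fin.succ).det = 0 := by
    intro i
    rw [col0 lam α x n hn i]
    ring
  rw [Finset.sum_congr rfl (fun i _ => hrest i), Finset.sum_const, smul_zero]
  have h00 : Bmat lam α x (n+1) 0 0 = x := by
    simp [Bmat, bEnt]
  have h10 : Bmat lam α x (n+1) 1 0 = -(1+α) := by
    simp only [Bmat, Matrix.of_apply, bEnt, Fin.val_one, Fin.val_zero]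
    split_ifs <;> first | exact ‹False›.elim | (exfalso; omega) | (push_cast; ring1) | (rw [show (q:ℕ) = 0 from by omega]; push_cast; ring1) | (rw [show (q:ℕ) = n from by omega]; push_cast; ring1) | (rw [show (p:ℕ) = (q:ℕ)+1 from by omega]; push_cast; ring1)
  rw [Fin.succ_zero_eq_one] at *
  rw [h00, h10, Fin.succAbove_zero, minor0_det, minor_eq lam α x n hn]
  simp only [Fin.val_zero, Fin.val_one, pow_zero, pow_one]
  ring

lemma det_key (lam : ℝ) (n : ℕ) (hn : 1 ≤ n) :
    ∀ α : ℝ, (Bmat lam α (-(1+α)) n).det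
      = -(1+α) * ∏ l ∈ range n, (lam + (l:ℝ) + 1 + α) := by
  induction n, hn using Nat.le_induction with
  | base =>
    intro α
    rw [Matrix.det_fin_two]
    have h00 : Bmat lam α (-(1+α)) 1 0 0 = -(1+α) := by
      simp [Bmat, bEnt]
    have h01 : Bmat lam α (-(1+α)) 1 0 1 = -1 := by
      simp [Bmat, bEnt]
    have h10 : Bmat lam α (-(1+α)) 1 1 0 = -((1:ℝ)+α)*((1:ℝ)+1+α) := by
      simp [Bmat, bEnt]
    have h11 : Bmat lam α (-(1+α)) 1 1 1 = lam - 1 := by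
      simp [Bmat, bEnt]
    rw [h00, h01, h10, h11, Finset.prod_range_one]
    push_cast
    ring1
  | succ n hn ih =>
    intro α
    rw [det_expand lam α _ n hn, show (-(2+α) : ℝ) = -(1+(α+1)) by ring, ih (α+1)]
    have e1 : ∏ l ∈ range n, (lam + (l:ℝ) + 1 + (α+1))
        = ∏ l ∈ range n, (lam + (l:ℝ) + 2 + α) :=
      Finset.prod_congr rfl (fun i _ => by ring)
    have e2 : ∏ l ∈ range (n+1), (lam + (l:ℝ) + 1 + α)
        = (∏ l ∈ range n, (lam + (l:ℝ) + 2 + α)) * (lam + 1 + α) := by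
      rw [Finset.prod_range_succ' (fun l => lam + (l:ℝ) + 1 + α) n]
      push_cast
      exact congrArg₂ _ (Finset.prod_congr rfl fun i _ => by ring) (by ring)
    rw [e1, e2]
    ring1

lemma matrix_eq (α lam : ℝ) (κ : ℕ) (hκ : 2 ≤ κ) :
    lam • (1 : Matrix (Fin (κ+1)) (Fin (κ+1)) ℝ) - PATransferMatrix α κ
      = Bmat lam α lam κ := by
  ext i j
  have hi : (i : ℕ) ≤ κ := Nat.lt_succ_iff.mp i.isLt
  have hj : (j : ℕ) ≤ κ := Nat.lt_succ_iff.mp j.isLt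
  simp only [Matrix.sub_apply, Matrix.smul_apply, Matrix.one_apply, smul_eq_mul,
    PATransferMatrix, Matrix.of_apply, Bmat, bEnt, Fin.ext_iff, mul_ite, mul_one, mul_zero]
  split_ifs <;>
    first
      | rfl
      | exact ‹False›.elim
      | (exfalso; omega)
      | (push_cast; ring1)
      | (rw [show (j:ℕ) = κ from by omega]; push_cast; ring1)
      | (rw [show (i:ℕ) = (j:ℕ) from by omega]; push_cast; ring1)
      | (rw [show (i:ℕ) = (j:ℕ)+1 from by omega]; push_cast; ring1)

lemma Icc_prod (f : ℕ → ℝ) (m : ℕ) :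
    ∏ l ∈ Finset.Icc 1 m, f l = ∏ l ∈ range m, f (l+1) := by
  induction m with
  | zero => simp
  | succ m ih => rw [Finset.prod_Icc_succ_top (by omega), ih, Finset.prod_range_succ]

lemma det_formula (α lam : ℝ) (κ : ℕ) (hκ : 2 ≤ κ) :
    (lam • (1 : Matrix (Fin (κ+1)) (Fin (κ+1)) ℝ) - PATransferMatrix α κ).det
      = (lam - (2+α)) * ∏ l ∈ Finset.Icc 1 κ, (lam + (l:ℝ) + α) := by
  obtain ⟨n, rfl⟩ : ∃ n, κ = n + 1 := ⟨κ - 1, by omega⟩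
  have hn : 1 ≤ n := by omega
  rw [matrix_eq α lam _ hκ, det_expand lam α lam n hn,
      show (-(2+α) : ℝ) = -(1+(α+1)) by ring, det_key lam n hn (α+1)]
  have e1 : ∏ l ∈ range n, (lam + (l:ℝ) + 1 + (α+1))
      = ∏ l ∈ range n, (lam + (l:ℝ) + 2 + α) :=
    Finset.prod_congr rfl (fun i _ => by ring)
  have e2 : ∏ l ∈ Finset.Icc 1 (n+1), (lam + (l:ℝ) + α)
      = (∏ l ∈ range n, (lam + (l:ℝ) + 2 + α)) * (lam + 1 + α) := by
    rw [Icc_prod (fun l => lam + (l:ℝ) + α) (n+1),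
        Finset.prod_range_succ' (fun l => lam + ((l+1 : ℕ):ℝ) + α) n]
    push_cast
    exact congrArg₂ _ (Finset.prod_congr rfl fun i _ => by ring) (by ring)
  rw [e1, e2]
  ring1

end PAaux18

/-- For `α > −1` and `κ ≥ 2`, the characteristic polynomial of `A_κ`
satisfies `det(λI − A_κ) = (λ − (2+α)) ∏_{l=1}^κ (λ + l + α)`. In particular `2 + α`
is the unique positive eigenvalue of `A_κ`, and all other eigenvalues are the real
numbers `−(l+α)`, `l = 1, …, κ`. -/
theorem stmt_18 (α : ℝ) (hα : -1 < α) (κ : ℕ) (hκ : 2 ≤ κ) :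
    (∀ lam : ℝ,
      (lam • (1 : Matrix (Fin (κ + 1)) (Fin (κ + 1)) ℝ) - PATransferMatrix α κ).det
        = (lam - (2 + α)) * ∏ l ∈ Finset.Icc 1 κ, (lam + (l : ℝ) + α)) ∧
    (∀ μ : ℝ,
      (μ • (1 : Matrix (Fin (κ + 1)) (Fin (κ + 1)) ℝ) - PATransferMatrix α κ).det = 0
        ↔ (μ = 2 + α ∨ ∃ l : ℕ, 1 ≤ l ∧ l ≤ κ ∧ μ = -((l : ℝ) + α))) ∧
    (∀ μ : ℝ, 0 < μ →
      ((μ • (1 : Matrix (Fin (κ + 1)) (Fin (κ + 1)) ℝ) - PATransferMatrix α κ).det = 0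
        ↔ μ = 2 + α)) := by
  have hchar : ∀ μ : ℝ,
      (μ • (1 : Matrix (Fin (κ + 1)) (Fin (κ + 1)) ℝ) - PATransferMatrix α κ).det = 0
        ↔ (μ = 2 + α ∨ ∃ l : ℕ, 1 ≤ l ∧ l ≤ κ ∧ μ = -((l : ℝ) + α)) := by
    intro μ
    rw [PAaux18.det_formula α μ κ hκ, mul_eq_zero, sub_eq_zero, Finset.prod_eq_zero_iff]
    constructor
    · rintro (h | ⟨l, hl, h⟩)
      · exact Or.inl h
      · exact Or.inr ⟨l, (Finset.mem_Icc.mp hl).1, (Finset.mem_Icc.mp hl).2, by linarith⟩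
    · rintro (h | ⟨l, h1, h2, h3⟩)
      · exact Or.inl h
      · exact Or.inr ⟨l, Finset.mem_Icc.mpr ⟨h1, h2⟩, by linarith⟩
  refine ⟨fun lam => PAaux18.det_formula α lam κ hκ, hchar, fun μ hμ => ?_⟩
  rw [hchar μ]
  constructor
  · rintro (h | ⟨l, h1, h2, h3⟩)
    · exact h
    · exfalso
      have hl1 : (1:ℝ) ≤ (l:ℝ) := by exact_mod_cast h1
      linarith
  · exact fun h => Or.inl h
end

section
/- Let α > −1, κ ≥ 2 an integer, and let A_κ be the (κ+1)×(κ+1) matrix with A_{1,1} = 0, A_{1,j} = j + α for 2 ≤ j ≤ κ, A_{1,κ+1} = 1; A_{j+1,j} = j + α for 1 ≤ j ≤ κ − 1; A_{j,j} = −(j + α) for 2 ≤ j ≤ κ; A_{κ+1,κ} = (κ + α)(κ + 1 + α); A_{κ+1,κ+1} = 1; all other entries 0. Let p_k = (2 + α) Γ(k + α) Γ(3 + 2α)/(Γ(k + 3 + 2α) Γ(1 + α)) and define v ∈ ℝ^{κ+1} by v_i = p_i/(2 + α) for 1 ≤ i ≤ κ and v_{κ+1} = (2 + α)^{−1} Σ_{l>κ}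 p_l (l + α). Then A_κ v = (2 + α) v, all coordinates of v are positive, and aᵀv = 1 for a = (1 + α, 2 + α, …, κ + α, 1)ᵀ. -/
open Filter Finset Topology

namespace Stmt19Aux

noncomputable def q (α : ℝ) (k : ℕ) : ℝ :=
  (2+α) * Real.Gamma (3+2*α) / ((1+α) * Real.Gamma (1+α)) *
    (Real.Gamma ((k:ℝ)+2+α) / Real.Gamma ((k:ℝ)+3+2*α))

noncomputable def pd (α : ℝ) (k : ℕ) : ℝ :=
  (2 + α) * Real.Gamma ((k : ℝ) + α) * Real.Gamma (3 + 2 * α)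
    / (Real.Gamma ((k : ℝ) + 3 + 2 * α) * Real.Gamma (1 + α))

variable {α : ℝ} (hα : -1 < α)

lemma Gadd {x : ℝ} (hx : 0 < x) : Real.Gamma (x + 1) = x * Real.Gamma x :=
  Real.Gamma_add_one hx.ne'

include hα

lemma q_pos (k : ℕ) : 0 < q α k := by
  have h0 : (0:ℝ) ≤ (k:ℝ) := Nat.cast_nonneg k
  have h1 : (0:ℝ) < 1 + α := by linarith
  have h2 : (0:ℝ) < 2 + α := by linarith
  have h3 : (0:ℝ) < 3 + 2*α := by linarith
  have := Real.Gamma_pos_of_pos h1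
  have := Real.Gamma_pos_of_pos h3
  have := Real.Gamma_pos_of_pos (show (0:ℝ) < (k:ℝ)+2+α by linarith)
  have := Real.Gamma_pos_of_pos (show (0:ℝ) < (k:ℝ)+3+2*α by linarith)
  unfold q
  positivity

lemma q_zero : q α 0 = 2 + α := by
  have h1 : (0:ℝ) < 1 + α := by linarith
  have hG1 := Real.Gamma_pos_of_pos h1
  have hG3 := Real.Gamma_pos_of_pos (show (0:ℝ) < 3+2*α by linarith)
  unfold q
  rw [Nat.cast_zero]
  rw [show (0:ℝ)+2+α = (1+α)+1 by ring, Gadd h1, show (0:ℝ)+3+2*α = 3+2*α by ring]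
  field_simp

lemma pd_pos {k : ℕ} (hk : 1 ≤ k) : 0 < pd α k := by
  have h0 : (1:ℝ) ≤ (k:ℝ) := by exact_mod_cast hk
  have h1 : (0:ℝ) < 1 + α := by linarith
  have h2 : (0:ℝ) < 2 + α := by linarith
  have := Real.Gamma_pos_of_pos h1
  have := Real.Gamma_pos_of_pos (show (0:ℝ) < 3+2*α by linarith)
  have := Real.Gamma_pos_of_pos (show (0:ℝ) < (k:ℝ)+α by linarith)
  have := Real.Gamma_pos_of_pos (show (0:ℝ) < (k:ℝ)+3+2*α by linarith)
  unfold pd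
  positivity

lemma diff (k : ℕ) : pd α (k+1) * ((k:ℝ)+1+α) = q α k - q α (k+1) := by
  have h0 : (0:ℝ) ≤ (k:ℝ) := Nat.cast_nonneg k
  have h1 : (0:ℝ) < 1 + α := by linarith
  have hG1 := Real.Gamma_pos_of_pos h1
  have hG3 := Real.Gamma_pos_of_pos (show (0:ℝ) < 3+2*α by linarith)
  have hxa : (0:ℝ) < (k:ℝ)+1+α := by linarith
  have hxb : (0:ℝ) < (k:ℝ)+2+α := by linarith
  have hxc : (0:ℝ) < (k:ℝ)+3+2*α := by linarith
  have hGb := Real.Gamma_pos_of_pos hxc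
  have e1 : Real.Gamma ((k:ℝ)+2+α) = ((k:ℝ)+1+α) * Real.Gamma ((k:ℝ)+1+α) := by
    rw [show (k:ℝ)+2+α = ((k:ℝ)+1+α)+1 by ring, Gadd hxa]
  have e2 : Real.Gamma ((k:ℝ)+3+α) = ((k:ℝ)+2+α) * (((k:ℝ)+1+α) * Real.Gamma ((k:ℝ)+1+α)) := by
    rw [show (k:ℝ)+3+α = ((k:ℝ)+2+α)+1 by ring, Gadd hxb, e1]
  have e3 : Real.Gamma ((k:ℝ)+4+2*α) = ((k:ℝ)+3+2*α) * Real.Gamma ((k:ℝ)+3+2*α) := by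
    rw [show (k:ℝ)+4+2*α = ((k:ℝ)+3+2*α)+1 by ring, Gadd hxc]
  unfold pd q
  push_cast
  rw [show (k:ℝ)+1+3+2*α = (k:ℝ)+4+2*α by ring, show (k:ℝ)+1+2+α = (k:ℝ)+3+α by ring,
    show (k:ℝ)+1+α = (k:ℝ)+1+α from rfl, e1, e2, e3]
  field_simp
  ring

lemma qe {k : ℕ} (hk : 1 ≤ k) : (1+α) * q α k = pd α k * ((k:ℝ)+α) * ((k:ℝ)+1+α) := by
  have h0 : (1:ℝ) ≤ (k:ℝ) := by exact_mod_cast hk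
  have h1 : (0:ℝ) < 1 + α := by linarith
  have hG1 := Real.Gamma_pos_of_pos h1
  have hG3 := Real.Gamma_pos_of_pos (show (0:ℝ) < 3+2*α by linarith)
  have hxa : (0:ℝ) < (k:ℝ)+α := by linarith
  have hxb : (0:ℝ) < (k:ℝ)+1+α := by linarith
  have hGb := Real.Gamma_pos_of_pos (show (0:ℝ) < (k:ℝ)+3+2*α by linarith)
  have e1 : Real.Gamma ((k:ℝ)+2+α)
      = ((k:ℝ)+1+α) * (((k:ℝ)+α) * Real.Gamma ((k:ℝ)+α)) := by
    rw [show (k:ℝ)+2+α = ((k:ℝ)+1+α)+1 by ring, Gadd hxb,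
      show (k:ℝ)+1+α = ((k:ℝ)+α)+1 by ring, Gadd hxa]
  unfold pd q
  rw [e1]
  field_simp

lemma recur {k : ℕ} (hk : 1 ≤ k) :
    pd α k * ((k:ℝ)+α) = pd α (k+1) * ((k:ℝ)+3+2*α) := by
  have h0 : (1:ℝ) ≤ (k:ℝ) := by exact_mod_cast hk
  have h1 : (0:ℝ) < 1 + α := by linarith
  have hG1 := Real.Gamma_pos_of_pos h1
  have hG3 := Real.Gamma_pos_of_pos (show (0:ℝ) < 3+2*α by linarith)
  have hxa : (0:ℝ) < (k:ℝ)+α := by linarith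
  have hxc : (0:ℝ) < (k:ℝ)+3+2*α := by linarith
  have hGb := Real.Gamma_pos_of_pos hxc
  have e1 : Real.Gamma ((k:ℝ)+1+α) = ((k:ℝ)+α) * Real.Gamma ((k:ℝ)+α) := by
    rw [show (k:ℝ)+1+α = ((k:ℝ)+α)+1 by ring, Gadd hxa]
  have e3 : Real.Gamma ((k:ℝ)+4+2*α) = ((k:ℝ)+3+2*α) * Real.Gamma ((k:ℝ)+3+2*α) := by
    rw [show (k:ℝ)+4+2*α = ((k:ℝ)+3+2*α)+1 by ring, Gadd hxc]
  unfold pd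
  push_cast
  rw [show (k:ℝ)+1+3+2*α = (k:ℝ)+4+2*α by ring, e1, e3]
  field_simp

lemma g_pos (k : ℕ) : 0 < pd α (k+1) * ((k:ℝ)+1+α) := by
  have h0 : (0:ℝ) ≤ (k:ℝ) := Nat.cast_nonneg k
  exact mul_pos (pd_pos hα (Nat.le_add_left 1 k)) (by linarith)

lemma q_anti : Antitone (q α) := by
  apply antitone_nat_of_succ_le
  intro k
  have h := g_pos hα k
  rw [diff hα k] at h
  linarith

lemma q_tendsto : Tendsto (q α) atTop (𝓝 0) := by
  have hbdd : BddBelow (Set.range (q α)) := by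
    refine ⟨0, ?_⟩
    rintro x ⟨k, rfl⟩
    exact (q_pos hα k).le
  have hlim := tendsto_atTop_ciInf (q_anti hα) hbdd
  have hL0 : 0 ≤ ⨅ k, q α k := le_ciInf fun k => (q_pos hα k).le
  have hL : (⨅ k, q α k) = 0 := by
    by_contra hne
    have hLpos : 0 < ⨅ k, q α k := lt_of_le_of_ne hL0 (Ne.symm hne)
    set L := ⨅ k, q α k with hLdef
    have hLle : ∀ k, L ≤ q α k := fun k => ciInf_le hbdd k
    -- partial sums of g are bounded, so g is summable
    have hps : ∀ n, ∑ k ∈ range n, pd α (k+1) * ((k:ℝ)+1+α) = q α 0 - q α n := by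
      intro n
      rw [Finset.sum_congr rfl fun k _ => diff hα k]
      exact Finset.sum_range_sub' (q α) n
    have hsum : Summable (fun k => pd α (k+1) * ((k:ℝ)+1+α)) := by
      apply summable_of_sum_range_le (c := q α 0) (fun n => (g_pos hα n).le)
      intro n
      rw [hps n]
      have := q_pos hα n
      linarith
    have h1 : (0:ℝ) < 1 + α := by linarith
    -- lower bound for g
    have hlow : ∀ k : ℕ, (1+α) * L / ((k:ℝ)+2+α) ≤ pd α (k+1) * ((k:ℝ)+1+α) := by
      intro k
      have h0 : (0:ℝ) ≤ (k:ℝ) := Nat.cast_nonneg k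
      have hq := qe hα (k := k+1) (Nat.le_add_left 1 k)
      push_cast at hq
      have hden : (0:ℝ) < (k:ℝ)+2+α := by linarith
      rw [div_le_iff₀ hden]
      have : (1+α) * L ≤ (1+α) * q α (k+1) :=
        mul_le_mul_of_nonneg_left (hLle (k+1)) h1.le
      calc (1+α) * L ≤ (1+α) * q α (k+1) := this
        _ = pd α (k+1) * ((k:ℝ)+1+α) * ((k:ℝ)+2+α) := by rw [hq]; ring
    have hsum2 : Summable (fun k : ℕ => (1+α) * L / ((k:ℝ)+2+α)) := by
      apply Summable.of_nonneg_of_le (fun k => ?_) hlow hsum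
      have h0 : (0:ℝ) ≤ (k:ℝ) := Nat.cast_nonneg k
      exact div_nonneg (mul_nonneg h1.le hLpos.le) (by linarith)
    have hcL : ((1+α) * L) ≠ 0 := (mul_pos h1 hLpos).ne'
    have hsum3 : Summable (fun k : ℕ => 1 / ((k:ℝ)+2+α)) := by
      have := hsum2.mul_left ((1+α) * L)⁻¹
      apply this.congr
      intro k
      field_simp
    set c : ℕ := ⌈2+α⌉₊ with hcdef
    have hc : 2+α ≤ (c:ℝ) := Nat.le_ceil _
    have hsum4 : Summable (fun k : ℕ => 1 / ((k + c : ℕ):ℝ)) := by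
      apply Summable.of_nonneg_of_le (fun k => by positivity) (fun k => ?_) hsum3
      have h0 : (0:ℝ) ≤ (k:ℝ) := Nat.cast_nonneg k
      rw [one_div, one_div]
      apply inv_anti₀ (by linarith)
      push_cast
      linarith
    have := (summable_nat_add_iff (f := fun n : ℕ => 1 / (n:ℝ)) c).mp hsum4
    exact Real.not_summable_one_div_natCast this
  rwa [hL] at hlim

lemma q_hasSum (N : ℕ) :
    HasSum (fun l => pd α ((N+l)+1) * (((N+l : ℕ):ℝ)+1+α)) (q α N) := by
  rw [hasSum_iff_tendsto_nat_of_nonneg (fun l => (g_pos hα (N+l)).le)]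
  have hps : ∀ n, ∑ l ∈ range n, pd α ((N+l)+1) * (((N+l : ℕ):ℝ)+1+α)
      = q α N - q α (N+n) := by
    intro n
    rw [Finset.sum_congr rfl fun l _ => diff hα (N+l)]
    exact Finset.sum_range_sub' (fun l => q α (N+l)) n
  have h2 : Tendsto (fun n => q α (N+n)) atTop (𝓝 0) := by
    have := (q_tendsto hα).comp (tendsto_add_atTop_nat N)
    exact this.congr fun n => congrArg (q α) (Nat.add_comm n N)
  have h3 := Tendsto.sub (tendsto_const_nhds (x := q α N) (f := (atTop : Filter ℕ))) h2
  simp only [sub_zero] at h3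
  exact Tendsto.congr (fun n => (hps n).symm) h3

lemma tel (N n : ℕ) :
    ∑ l ∈ range n, pd α ((N+l)+1) * (((N+l : ℕ):ℝ)+1+α) = q α N - q α (N+n) := by
  rw [Finset.sum_congr rfl fun l _ => diff hα (N+l)]
  exact Finset.sum_range_sub' (fun l => q α (N+l)) n

omit hα

noncomputable def Wd (α : ℝ) (m : ℕ) (p : ℕ → ℝ) : ℕ → ℝ :=
  fun n => if n + 1 ≤ m + 2 then p (n+1) / (2+α) else (2+α)⁻¹ * q α (m+2)

noncomputable def Ed (α : ℝ) (m : ℕ) : ℕ → ℕ → ℝ := fun n J =>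
  if n + 1 = 1 then
    (if J + 1 = 1 then 0 else if J + 1 = m + 2 + 1 then 1 else ((J+1 : ℕ) : ℝ) + α)
  else if n + 1 = m + 2 + 1 then
    (if J + 1 = m + 2 then (((m+2 : ℕ) : ℝ) + α) * (((m+2 : ℕ) : ℝ) + 1 + α)
     else if J + 1 = m + 2 + 1 then 1 else 0)
  else if n + 1 = J + 1 then -(((n+1 : ℕ) : ℝ) + α)
  else if n + 1 = J + 1 + 1 then ((J+1 : ℕ) : ℝ) + α
  else 0

noncomputable def Ad (α : ℝ) (m : ℕ) : ℕ → ℝ :=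
  fun n => if n + 1 ≤ m + 2 then (n : ℝ) + 1 + α else 1

end Stmt19Aux


open Matrix

/-- For `α > −1`, `κ ≥ 2`, the vector
`v = (2+α)⁻¹ (p_1, …, p_κ, Σ_{l>κ} p_l (l+α))` built from the limiting degree
distribution `p_k = (2+α) Γ(k+α) Γ(3+2α)/(Γ(k+3+2α) Γ(1+α))` is a positive eigenvector
of `A_κ` for the eigenvalue `2 + α`, normalized so that `aᵀ v = 1` for the activity
vector `a = (1+α, …, κ+α, 1)`. -/
theorem stmt_19 (α : ℝ) (hα : -1 < α) (κ : ℕ) (hκ : 2 ≤ κ)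
    (p : ℕ → ℝ)
    (hp : ∀ k, 1 ≤ k →
      p k = (2 + α) * Real.Gamma ((k : ℝ) + α) * Real.Gamma (3 + 2 * α)
        / (Real.Gamma ((k : ℝ) + 3 + 2 * α) * Real.Gamma (1 + α)))
    (v : Fin (κ + 1) → ℝ)
    (hv : ∀ i : Fin (κ + 1),
      v i = if (i : ℕ) + 1 ≤ κ then p ((i : ℕ) + 1) / (2 + α)
        else (2 + α)⁻¹ * ∑' l : ℕ, p (κ + 1 + l) * (((κ + 1 + l : ℕ) : ℝ) + α))
    (act : Fin (κ + 1) → ℝ)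
    (hact : ∀ i : Fin (κ + 1),
      act i = if (i : ℕ) + 1 ≤ κ then ((i : ℕ) : ℝ) + 1 + α else 1) :
    (PATransferMatrix α κ) *ᵥ v = (2 + α) • v ∧
    (∀ i : Fin (κ + 1), 0 < v i) ∧
    act ⬝ᵥ v = 1 := by
  obtain ⟨m, rfl⟩ : ∃ m, κ = m + 2 := ⟨κ - 2, by omega⟩
  have h1 : (0:ℝ) < 1 + α := by linarith
  have h2 : (0:ℝ) < 2 + α := by linarith
  have hpd : ∀ k, 1 ≤ k → p k = Stmt19Aux.pd α k := fun k hk => hp k hk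
  -- value of the tail sum
  have hT : (∑' l : ℕ, p (m+2+1+l) * (((m+2+1+l : ℕ) : ℝ) + α)) = Stmt19Aux.q α (m+2) := by
    have heq : (fun l : ℕ => p (m+2+1+l) * (((m+2+1+l : ℕ) : ℝ) + α))
        = fun l => Stmt19Aux.pd α ((m+2+l)+1) * (((m+2+l : ℕ) : ℝ)+1+α) := by
      funext l
      rw [show m+2+1+l = (m+2+l)+1 by omega, hpd _ (by omega)]
      push_cast
      ring
    rw [heq, (Stmt19Aux.q_hasSum hα (m+2)).tsum_eq]
  -- v as a total function of the underlying natural index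
  have hWv : ∀ j : Fin (m+2+1), v j = Stmt19Aux.Wd α m p (j:ℕ) := by
    intro j
    rw [hv j]
    by_cases h : (j:ℕ)+1 ≤ m+2
    · simp only [Stmt19Aux.Wd, if_pos h]
    · simp only [Stmt19Aux.Wd, if_neg h, hT]
  have hentry : ∀ i j : Fin (m+2+1),
      PATransferMatrix α (m+2) i j = Stmt19Aux.Ed α m (i:ℕ) (j:ℕ) := fun i j => rfl
  have hsum : ∀ i : Fin (m+2+1), (PATransferMatrix α (m+2) *ᵥ v) i
      = ∑ J ∈ Finset.range (m+2+1), Stmt19Aux.Ed α m (i:ℕ) J * Stmt19Aux.Wd α m p J := by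
    intro i
    simp only [Matrix.mulVec, dotProduct]
    rw [Finset.sum_congr rfl (fun j _ => by rw [hentry i j, hWv j])]
    exact Fin.sum_univ_eq_sum_range (fun J => Stmt19Aux.Ed α m (i:ℕ) J * Stmt19Aux.Wd α m p J) _
  refine ⟨?_, ?_, ?_⟩
  · -- eigenvector equation
    funext i
    rw [hsum i, Pi.smul_apply, smul_eq_mul, hWv i]
    by_cases h0 : (i:ℕ) = 0
    · -- first row
      rw [h0]
      have hq1 : Stmt19Aux.q α 1 = (2+α) * p 1 := by
        have hh := Stmt19Aux.qe hα (k := 1) le_rfl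
        rw [← hpd 1 le_rfl] at hh
        push_cast at hh
        apply mul_left_cancel₀ h1.ne'
        rw [hh]; ring
      have e0 : Stmt19Aux.Ed α m 0 0 * Stmt19Aux.Wd α m p 0 = 0 := by
        simp [Stmt19Aux.Ed]
      have elast : Stmt19Aux.Ed α m 0 (m+2) * Stmt19Aux.Wd α m p (m+2)
          = (2+α)⁻¹ * Stmt19Aux.q α (m+2) := by
        simp [Stmt19Aux.Ed, Stmt19Aux.Wd, show ¬(m+2+1 = 1) from by omega,
          show ¬(m+2+1 ≤ m+2) from by omega]
      have emid : ∀ J ∈ Finset.range (m+1),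
          Stmt19Aux.Ed α m 0 (0+1+J) * Stmt19Aux.Wd α m p (0+1+J)
          = (2+α)⁻¹ * (Stmt19Aux.pd α ((1+J)+1) * (((1+J : ℕ) : ℝ)+1+α)) := by
        intro J hJ
        have hJ' : J < m+1 := Finset.mem_range.mp hJ
        rw [show 0+1+J = 1+J by omega, ← hpd ((1+J)+1) (by omega)]
        simp [Stmt19Aux.Ed, Stmt19Aux.Wd, show ¬(1+J+1 = 1) from by omega,
          show ¬(1+J+1 = m+2+1) from by omega, show 1+J+1 ≤ m+2 from by omega]
        rw [if_neg (show ¬(1+J = m+2) by omega)]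
        push_cast
        ring
      rw [Finset.range_eq_Ico, Finset.sum_Ico_succ_top (by omega),
        Finset.sum_eq_sum_Ico_succ_bot (by omega), Finset.sum_Ico_eq_sum_range,
        show m+2-(0+1) = m+1 from rfl,
        Finset.sum_congr rfl emid, ← Finset.mul_sum, Stmt19Aux.tel hα 1 (m+1),
        show (1:ℕ)+(m+1) = m+2 by omega, e0, elast, hq1]
      simp only [Stmt19Aux.Wd, if_pos (show (0:ℕ)+1 ≤ m+2 by omega)]
      rw [show (0:ℕ)+1 = 1 from rfl]
      field_simp
      ring
    · by_cases hl : (i:ℕ) = m+2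
      · -- last row
        rw [hl]
        have hsplitC : ∀ J ∈ Finset.range (m+2+1),
            Stmt19Aux.Ed α m (m+2) J * Stmt19Aux.Wd α m p J
            = (if J = m+1 then
                (((m+2:ℕ):ℝ)+α) * (((m+2:ℕ):ℝ)+1+α) * (p (m+2)/(2+α)) else 0)
              + (if J = m+2 then (2+α)⁻¹ * Stmt19Aux.q α (m+2) else 0) := by
          intro J hJ
          rcases eq_or_ne J (m+1) with rfl | hJ1
          · rw [if_pos rfl, if_neg (by omega)]
            simp [Stmt19Aux.Ed, Stmt19Aux.Wd, show ¬(m+2+1 = 1) from by omega,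
              show m+1+1 = m+2 from by omega]
          · rcases eq_or_ne J (m+2) with rfl | hJ2
            · rw [if_neg hJ1, if_pos rfl]
              simp [Stmt19Aux.Ed, Stmt19Aux.Wd, show ¬(m+2+1 = 1) from by omega,
                show ¬(m+2+1 = m+2) from by omega, show ¬(m+2+1 ≤ m+2) from by omega]
            · rw [if_neg hJ1, if_neg hJ2]
              simp [Stmt19Aux.Ed, show ¬(m+2+1 = 1) from by omega,
                show ¬(J+1 = m+2) from by omega, show ¬(J+1 = m+2+1) from by omega, hJ1, hJ2]
        rw [Finset.sum_congr rfl hsplitC, Finset.sum_add_distrib,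
          Finset.sum_ite_eq' _ _ _, Finset.sum_ite_eq' _ _ _,
          if_pos (Finset.mem_range.mpr (by omega)), if_pos (Finset.mem_range.mpr (by omega))]
        simp only [Stmt19Aux.Wd, if_neg (show ¬ (m+2)+1 ≤ m+2 by omega)]
        have hq := Stmt19Aux.qe hα (k := m+2) (by omega)
        rw [← hpd (m+2) (by omega)] at hq
        push_cast at hq ⊢
        field_simp
        linarith [hq]
      · -- middle rows
        obtain ⟨n, hn⟩ : ∃ n, (i:ℕ) = n + 1 := ⟨(i:ℕ)-1, by omega⟩
        have hnle : n+1 ≤ m+1 := by have := i.isLt; omega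
        rw [hn]
        have hsplitB : ∀ J ∈ Finset.range (m+2+1),
            Stmt19Aux.Ed α m (n+1) J * Stmt19Aux.Wd α m p J
            = (if J = n then (((n+1:ℕ):ℝ)+α) * (p (n+1)/(2+α)) else 0)
              + (if J = n+1 then -(((n+1+1:ℕ):ℝ)+α) * (p (n+1+1)/(2+α)) else 0) := by
          intro J hJ
          rcases eq_or_ne J n with hJe | hJ1
          · rw [hJe, if_pos rfl, if_neg (by omega)]
            simp [Stmt19Aux.Ed, Stmt19Aux.Wd, show ¬(n+1+1 = 1) from by omega,
              show ¬(n+1+1 = m+2+1) from by omega, show ¬(n+1+1 = n+1) from by omega,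
              show n+1 ≤ m+2 from by omega, show n ≠ m+1 from by omega]
          · rcases eq_or_ne J (n+1) with hJe | hJ2
            · rw [hJe, if_neg (by omega), if_pos rfl]
              simp [Stmt19Aux.Ed, Stmt19Aux.Wd, show ¬(n+1+1 = 1) from by omega,
                show ¬(n+1+1 = m+2+1) from by omega, show n+1+1 ≤ m+2 from by omega,
                show n ≠ m+1 from by omega]
            · rw [if_neg hJ1, if_neg hJ2]
              simp [Stmt19Aux.Ed, show ¬(n+1+1 = 1) from by omega,
                show ¬(n+1+1 = m+2+1) from by omega, show ¬(n+1+1 = J+1) from by omega,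
                show ¬(n+1+1 = J+1+1) from by omega, show n ≠ m+1 from by omega,
                show ¬(n+1 = J) from by omega, show ¬(n = J) from by omega, hJ1, hJ2]
        rw [Finset.sum_congr rfl hsplitB, Finset.sum_add_distrib,
          Finset.sum_ite_eq' _ _ _, Finset.sum_ite_eq' _ _ _,
          if_pos (Finset.mem_range.mpr (by omega)), if_pos (Finset.mem_range.mpr (by omega))]
        simp only [Stmt19Aux.Wd, if_pos (show n+1+1 ≤ m+2 by omega)]
        have hr := Stmt19Aux.recur hα (k := n+1) (by omega)
        rw [← hpd (n+1) (by omega), ← hpd (n+1+1) (by omega)] at hr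
        push_cast at hr ⊢
        field_simp
        linarith [hr]
  · -- positivity
    intro i
    rw [hWv i]
    by_cases h : (i:ℕ)+1 ≤ m+2
    · simp only [Stmt19Aux.Wd, if_pos h]
      rw [hpd _ (by omega)]
      exact div_pos (Stmt19Aux.pd_pos hα (by omega)) h2
    · simp only [Stmt19Aux.Wd, if_neg h]
      exact mul_pos (inv_pos.mpr h2) (Stmt19Aux.q_pos hα _)
  · -- normalization
    have hdot : act ⬝ᵥ v
        = ∑ J ∈ Finset.range (m+2+1), Stmt19Aux.Ad α m J * Stmt19Aux.Wd α m p J := by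
      simp only [dotProduct]
      rw [Finset.sum_congr rfl (fun j _ => by rw [hact j, hWv j])]
      exact Fin.sum_univ_eq_sum_range (fun J => Stmt19Aux.Ad α m J * Stmt19Aux.Wd α m p J) _
    have emid2 : ∀ J ∈ Finset.range (m+2),
        Stmt19Aux.Ad α m J * Stmt19Aux.Wd α m p J
        = (2+α)⁻¹ * (Stmt19Aux.pd α ((0+J)+1) * (((0+J : ℕ) : ℝ)+1+α)) := by
      intro J hJ
      have hJ' : J < m+2 := Finset.mem_range.mp hJ
      rw [show (0+J)+1 = J+1 by omega, ← hpd (J+1) (by omega)]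
      simp [Stmt19Aux.Ad, Stmt19Aux.Wd, show J+1 ≤ m+2 from by omega]
      push_cast
      ring
    have elast2 : Stmt19Aux.Ad α m (m+2) * Stmt19Aux.Wd α m p (m+2)
        = (2+α)⁻¹ * Stmt19Aux.q α (m+2) := by
      simp [Stmt19Aux.Ad, Stmt19Aux.Wd, show ¬(m+2+1 ≤ m+2) from by omega]
    rw [hdot, Finset.range_eq_Ico, Finset.sum_Ico_succ_top (by omega), ← Finset.range_eq_Ico,
      Finset.sum_congr rfl emid2, ← Finset.mul_sum, Stmt19Aux.tel hα 0 (m+2),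
      show (0:ℕ)+(m+2) = m+2 by omega, Stmt19Aux.q_zero hα, elast2]
    field_simp
    ring
end
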